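/- arXiv:1001.5095 — 4 statements merged into one kernel-verified Lean document; each statement's English description precedes it below -/
import Mathlib

section
/- Let V be a linear subspace of ℝ^d with 1 ≤ dim V ≤ d−1 and let W = V^⊥. Let A ⊆ V and B ⊆ W be Lebesgue-measurable cones (sets closed under multiplication by positive scalars). Then λ((A + B) ∩ B^d)/λ(B^d) = [λ_V(A ∩ B_V)/λ_V(B_V)] · [λ_W(B ∩ B_W)/λ_W(B_W)], where A + B = {a + b : a ∈ A, b ∈ B}, λ is Lebesgue measure on ℝ^d, λ_V and λ_W are Lebesgue measures on V and W, and B^d, B_V, B_W are the unit balls of ℝ^d, V, W respectively. -/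
/-!
Formalization of statements from "Projection Volumes of Hyperplane Arrangements"
by Klivans and Swartz.
-/

open scoped RealInnerProductSpace Pointwise
open MeasureTheory Metric Set

noncomputable section

attribute [local instance] Classical.decEq Classical.propDecidable

/-- Shorthand for the ambient Euclidean space `ℝ^d`. -/
abbrev Euc (d : ℕ) := EuclideanSpace ℝ (Fin d)

variable {E : Type*} [NormedAddCommGroup E] [InnerProductSpace ℝ E] [FiniteDimensional ℝ E]
  [MeasurableSpace E] [BorelSpace E]

/-- A (linear) hyperplane: the orthogonal complement of a nonzero vector,
i.e. a codimension-one linear subspace. -/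
def IsLinearHyperplane (H : Submodule ℝ E) : Prop :=
  ∃ η : E, η ≠ 0 ∧ H = (Submodule.span ℝ {η})ᗮ

/-- The intersection poset `L(𝒜)`: all intersections of subsets of `𝒜`
(the empty intersection being the whole space `⊤`), as a finset of subspaces.
It is ordered by *reverse* inclusion: `x ⊑ y` in `L(𝒜)` iff `y ≤ x` as submodules;
the minimal element `ℝ^d` is `⊤`. -/
def interPoset (A : Finset (Submodule ℝ E)) : Finset (Submodule ℝ E) :=
  A.powerset.image fun S => S.inf id

/-- The complement of the union of the hyperplanes of `𝒜`. -/
def hypComplement (A : Finset (Submodule ℝ E)) : Set E :=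
  {z | ∀ H ∈ A, z ∉ H}

/-- A region of `𝒜`: a connected component of the complement of the hyperplanes. -/
def IsRegion (A : Finset (Submodule ℝ E)) (C : Set E) : Prop :=
  ∃ z ∈ hypComplement A, C = connectedComponentIn (hypComplement A) z

/-- `p` is the nearest point of `C` to `z` (i.e. `p = π_C(z)`, the orthogonal
projection of `z` onto `C`; it is unique when `C` is nonempty, closed and convex). -/
def IsNearestPt (C : Set E) (z p : E) : Prop :=
  p ∈ C ∧ ∀ q ∈ C, dist z p ≤ dist z q

/-- A face of a convex set `C`: a nonempty exposed face (`C` itself included). -/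
def IsFaceOf (C F : Set E) : Prop :=
  F.Nonempty ∧ IsExposed ℝ C F

/-- The dimension of a set: the dimension of the direction space of its affine span. -/
def sdim (F : Set E) : ℕ := Module.finrank ℝ (vectorSpan ℝ F)

/-- `X_F`: the set of points `z` whose orthogonal projection onto `C` lies in the
relative interior (= intrinsic interior) of the face `F`. -/
def projRegion (C F : Set E) : Set E :=
  {z | ∃ p, IsNearestPt C z p ∧ p ∈ intrinsicInterior ℝ F}

/-- `ν_C(F)`: the fraction of the volume of the unit ball occupied by `X_F`. -/
def nuF (C F : Set E) : ℝ :=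
  (volume (projRegion C F ∩ closedBall (0 : E) 1)).toReal /
    (volume (closedBall (0 : E) 1)).toReal

/-- `ν_k(C)`: the sum of `ν_C(F)` over all `k`-dimensional faces `F` of `C`. -/
def nuK (C : Set E) (k : ℕ) : ℝ :=
  ∑ᶠ F ∈ {F | IsFaceOf C F ∧ sdim F = k}, nuF C F



open scoped ENNReal

set_option maxHeartbeats 1000000

namespace ConeVol

lemma cone_mem_iff {K : Set E} (hcone : ∀ c : ℝ, 0 < c → c • K ⊆ K) {x : E} (hx : x ≠ 0) :
    x ∈ K ↔ ‖x‖⁻¹ • x ∈ K := by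
  have h1 : (0:ℝ) < ‖x‖ := norm_pos_iff.2 hx
  constructor
  · intro h; exact hcone _ (inv_pos.2 h1) ⟨x, h, rfl⟩
  · intro h
    have := hcone _ h1 ⟨_, h, rfl⟩
    simpa [smul_inv_smul₀ h1.ne'] using this

lemma cone_radial [Nontrivial E] {K : Set E} (hK : MeasurableSet K)
    (hcone : ∀ c : ℝ, 0 < c → c • K ⊆ K) {g : ℝ → ℝ≥0∞} (hg : Measurable g) :
    ∫⁻ x, K.indicator 1 x * g ‖x‖ ∂(volume : Measure E)
      = (volume : Measure E).toSphere ((↑) ⁻¹' K : Set (sphere (0:E) 1))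
        * ∫⁻ r : Ioi (0:ℝ), g r ∂(Measure.volumeIoiPow (Module.finrank ℝ E - 1)) := by
  have hKm : MeasurableSet ((↑) ⁻¹' K : Set (sphere (0:E) 1)) :=
    hK.preimage measurable_subtype_coe
  have hmeas : Measurable fun y : sphere (0:E) 1 × Ioi (0:ℝ) =>
      ((↑) ⁻¹' K : Set (sphere (0:E) 1)).indicator 1 y.1 * g y.2 :=
    ((measurable_one.indicator hKm).comp measurable_fst).mul
      ((hg.comp measurable_subtype_coe).comp measurable_snd)
  calc
    ∫⁻ x, K.indicator 1 x * g ‖x‖ ∂(volume : Measure E)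
        = ∫⁻ x in ({0}ᶜ : Set E), K.indicator 1 x * g ‖x‖ ∂(volume : Measure E) := by
          rw [MeasureTheory.restrict_compl_singleton]
    _ = ∫⁻ x : ({0}ᶜ : Set E), K.indicator 1 ↑x * g ‖(x:E)‖ ∂((volume : Measure E).comap (↑)) :=
          (lintegral_subtype_comap (measurableSet_singleton 0).compl _).symm
    _ = ∫⁻ y : sphere (0:E) 1 × Ioi (0:ℝ),
          ((↑) ⁻¹' K : Set (sphere (0:E) 1)).indicator 1 y.1 * g y.2
          ∂((volume : Measure E).toSphere.prod
              (Measure.volumeIoiPow (Module.finrank ℝ E - 1))) := by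
          rw [← (volume : Measure E).measurePreserving_homeomorphUnitSphereProd.lintegral_comp
            hmeas]
          refine lintegral_congr fun x => ?_
          have hx : (x : E) ≠ 0 := x.2
          by_cases hxK : (x : E) ∈ K
          · have h2 : ‖(x:E)‖⁻¹ • (x:E) ∈ K := (cone_mem_iff hcone hx).1 hxK
            rw [Set.indicator_of_mem hxK,
              Set.indicator_of_mem (show ((homeomorphUnitSphereProd E) x).1 ∈
                (Subtype.val ⁻¹' K : Set (sphere (0:E) 1)) from by
                  simpa [Set.mem_preimage] using h2)]
            simp
          · have h2 : ‖(x:E)‖⁻¹ • (x:E) ∉ K := fun h => hxK ((cone_mem_iff hcone hx).2 h)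
            rw [Set.indicator_of_notMem hxK,
              Set.indicator_of_notMem (show ((homeomorphUnitSphereProd E) x).1 ∉
                (Subtype.val ⁻¹' K : Set (sphere (0:E) 1)) from by
                  simpa [Set.mem_preimage] using h2)]
            simp
    _ = _ := by
          rw [lintegral_prod_mul (f := fun ω : sphere (0:E) 1 => ((↑) ⁻¹' K : Set (sphere (0:E) 1)).indicator 1 ω)
            (g := fun r : Ioi (0:ℝ) => g ↑r) (measurable_one.indicator hKm).aemeasurable
            ((hg.comp measurable_subtype_coe)).aemeasurable, lintegral_indicator_one hKm]


lemma cone_ball [Nontrivial E] {K : Set E} (hK : MeasurableSet K)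
    (hcone : ∀ c : ℝ, 0 < c → c • K ⊆ K) :
    volume (K ∩ closedBall (0:E) 1)
      = (volume : Measure E).toSphere ((↑) ⁻¹' K : Set (sphere (0:E) 1))
        * ∫⁻ r : Ioi (0:ℝ), (Iic (1:ℝ)).indicator 1 ↑r
            ∂(Measure.volumeIoiPow (Module.finrank ℝ E - 1)) := by
  rw [← lintegral_indicator_one (hK.inter measurableSet_closedBall),
    ← cone_radial hK hcone (g := (Iic (1:ℝ)).indicator 1)
      (measurable_one.indicator measurableSet_Iic)]
  refine lintegral_congr fun x => ?_
  by_cases h1 : x ∈ K <;> by_cases h2 : ‖x‖ ≤ 1 <;>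
    simp [Set.indicator_apply, h1, h2, mem_closedBall_zero_iff]

lemma cone_sum_volume (V : Submodule ℝ E)
    (h1 : 0 < Module.finrank ℝ ↥V) (h2 : 0 < Module.finrank ℝ ↥Vᗮ)
    {A B : Set E}
    (hAV : A ⊆ (V : Set E)) (hBW : B ⊆ (Vᗮ : Set E))
    (hAm : MeasurableSet A) (hBm : MeasurableSet B)
    (hAcone : ∀ c : ℝ, 0 < c → c • A ⊆ A) (hBcone : ∀ c : ℝ, 0 < c → c • B ⊆ B) :
    volume ((A + B) ∩ closedBall (0:E) 1)
      = (volume : Measure ↥V).toSphere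
            ((↑) ⁻¹' (Subtype.val ⁻¹' A : Set ↥V) : Set (sphere (0:↥V) 1))
        * (volume : Measure ↥Vᗮ).toSphere
            ((↑) ⁻¹' (Subtype.val ⁻¹' B : Set ↥Vᗮ) : Set (sphere (0:↥Vᗮ) 1))
        * ∫⁻ s : Ioi (0:ℝ), (∫⁻ r : Ioi (0:ℝ),
              {p : ℝ | (s:ℝ)^2 + p^2 ≤ 1}.indicator 1 ↑r
                ∂(Measure.volumeIoiPow (Module.finrank ℝ ↥Vᗮ - 1)))
            ∂(Measure.volumeIoiPow (Module.finrank ℝ ↥V - 1)) := by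
  haveI : Nontrivial ↥V := Module.nontrivial_of_finrank_pos h1
  haveI : Nontrivial ↥Vᗮ := Module.nontrivial_of_finrank_pos h2
  have hcompl : IsCompl V Vᗮ := Submodule.isCompl_orthogonal_of_hasOrthogonalProjection
  -- the linear isometry equivalence `WithLp 2 (V × Vᗮ) ≃ E`, `(x, y) ↦ x + y`
  let L : WithLp 2 (↥V × ↥Vᗮ) ≃ₗᵢ[ℝ] E :=
    LinearEquiv.isometryOfInner
      ((WithLp.linearEquiv 2 ℝ (↥V × ↥Vᗮ)).trans (Submodule.prodEquivOfIsCompl V Vᗮ hcompl))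
      (by
        intro x y
        have h12 : ⟪((x.ofLp.1 : ↥V) : E), ((y.ofLp.2 : ↥Vᗮ) : E)⟫ = 0 :=
          Submodule.inner_right_of_mem_orthogonal x.fst.2 y.snd.2
        have h21 : ⟪((x.ofLp.2 : ↥Vᗮ) : E), ((y.ofLp.1 : ↥V) : E)⟫ = 0 :=
          Submodule.inner_left_of_mem_orthogonal y.fst.2 x.snd.2
        simp only [LinearEquiv.trans_apply, WithLp.coe_linearEquiv,
          Submodule.coe_prodEquivOfIsCompl', WithLp.prod_inner_apply, Submodule.coe_inner,
          inner_add_add_self, inner_add_left, inner_add_right, h12, h21]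
        ring)
  have hL : ∀ x : WithLp 2 (↥V × ↥Vᗮ), L x = ((x.fst : ↥V) : E) + ((x.snd : ↥Vᗮ) : E) := by
    intro x
    simp [L, LinearEquiv.coe_isometryOfInner, LinearEquiv.trans_apply,
      WithLp.linearEquiv_apply, Submodule.coe_prodEquivOfIsCompl']
  let bV := stdOrthonormalBasis ℝ ↥V
  let bW := stdOrthonormalBasis ℝ ↥Vᗮ
  let Bb : OrthonormalBasis (Fin (Module.finrank ℝ ↥V) ⊕ Fin (Module.finrank ℝ ↥Vᗮ)) ℝ E := (bV.prod bW).map L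
  let Ψ : (↥V × ↥Vᗮ) ≃ᵐ E :=
    (bV.measurableEquiv.prodCongr bW.measurableEquiv).trans
      (((MeasurableEquiv.toLp 2 (Fin (Module.finrank ℝ ↥V) → ℝ)).symm.prodCongr
          (MeasurableEquiv.toLp 2 (Fin (Module.finrank ℝ ↥Vᗮ) → ℝ)).symm).trans
        ((MeasurableEquiv.sumPiEquivProdPi (fun _ : Fin (Module.finrank ℝ ↥V) ⊕ Fin (Module.finrank ℝ ↥Vᗮ) => ℝ)).symm.trans
          ((MeasurableEquiv.toLp 2 (Fin (Module.finrank ℝ ↥V) ⊕ Fin (Module.finrank ℝ ↥Vᗮ) → ℝ)).symm.symm.trans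
            Bb.measurableEquiv.symm)))
  have hΨp : MeasurePreserving Ψ
      ((volume : Measure ↥V).prod (volume : Measure ↥Vᗮ)) (volume : Measure E) := by
    exact ((Bb.measurePreserving_measurableEquiv.symm Bb.measurableEquiv).comp
      (((EuclideanSpace.volume_preserving_symm_measurableEquiv_toLp (Fin (Module.finrank ℝ ↥V) ⊕ Fin (Module.finrank ℝ ↥Vᗮ))).symm
          (MeasurableEquiv.toLp 2 (Fin (Module.finrank ℝ ↥V) ⊕ Fin (Module.finrank ℝ ↥Vᗮ) → ℝ)).symm).comp
        ((volume_measurePreserving_sumPiEquivProdPi_symm (fun _ : Fin (Module.finrank ℝ ↥V) ⊕ Fin (Module.finrank ℝ ↥Vᗮ) => ℝ)).comp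
          (((EuclideanSpace.volume_preserving_symm_measurableEquiv_toLp (Fin (Module.finrank ℝ ↥V))).prod
              (EuclideanSpace.volume_preserving_symm_measurableEquiv_toLp (Fin (Module.finrank ℝ ↥Vᗮ)))).comp
            (bV.measurePreserving_measurableEquiv.prod
              bW.measurePreserving_measurableEquiv)))))
  have hΨeq : ∀ p : ↥V × ↥Vᗮ, Ψ p = ((p.1 : ↥V) : E) + ((p.2 : ↥Vᗮ) : E) := by
    intro p
    apply Bb.repr.injective
    have hrepr : Bb.repr (Ψ p)
        = (EuclideanSpace.equiv (Fin (Module.finrank ℝ ↥V) ⊕ Fin (Module.finrank ℝ ↥Vᗮ)) ℝ).symm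
            ((Equiv.sumPiEquivProdPi (fun _ : Fin (Module.finrank ℝ ↥V) ⊕ Fin (Module.finrank ℝ ↥Vᗮ) => ℝ)).symm
              (bV.repr p.1, bW.repr p.2)) := by
      show Bb.repr (Bb.repr.symm _) = _
      rw [LinearIsometryEquiv.apply_symm_apply]
      rfl
    rw [hrepr]
    ext k
    rw [OrthonormalBasis.repr_apply_apply]
    have hBk : (Bb k : E) = L ((bV.prod bW) k) := by
      simp [Bb, OrthonormalBasis.map_apply]
    cases k with
    | inl i =>
        have : (Bb (Sum.inl i) : E) = ((bV i : ↥V) : E) := by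
          rw [hBk]
          simp [OrthonormalBasis.prod_apply, hL]
        rw [this]
        have hz : ⟪((bV i : ↥V) : E), ((p.2 : ↥Vᗮ) : E)⟫ = 0 :=
          Submodule.inner_right_of_mem_orthogonal (bV i).2 p.2.2
        rw [inner_add_right, hz, add_zero]
        have : ⟪((bV i : ↥V) : E), ((p.1 : ↥V) : E)⟫ = bV.repr p.1 i := by
          rw [← Submodule.coe_inner, ← OrthonormalBasis.repr_apply_apply]
        rw [this]
        rfl
    | inr j =>
        have : (Bb (Sum.inr j) : E) = ((bW j : ↥Vᗮ) : E) := by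
          rw [hBk]
          simp [OrthonormalBasis.prod_apply, hL]
        rw [this]
        have hz : ⟪((bW j : ↥Vᗮ) : E), ((p.1 : ↥V) : E)⟫ = 0 :=
          Submodule.inner_left_of_mem_orthogonal p.1.2 (bW j).2
        rw [inner_add_right, hz, zero_add]
        have : ⟪((bW j : ↥Vᗮ) : E), ((p.2 : ↥Vᗮ) : E)⟫ = bW.repr p.2 j := by
          rw [← Submodule.coe_inner, ← OrthonormalBasis.repr_apply_apply]
        rw [this]
        rfl
  set A' : Set ↥V := Subtype.val ⁻¹' A with hA'
  set B' : Set ↥Vᗮ := Subtype.val ⁻¹' B with hB'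
  have hA'm : MeasurableSet A' := hAm.preimage measurable_subtype_coe
  have hB'm : MeasurableSet B' := hBm.preimage measurable_subtype_coe
  have hA'cone : ∀ c : ℝ, 0 < c → c • A' ⊆ A' := by
    intro c hc x hx
    obtain ⟨y, hy, rfl⟩ := hx
    have : (c • (y : E)) ∈ A := hAcone c hc ⟨_, hy, rfl⟩
    simpa [hA', Set.mem_preimage] using this
  have hB'cone : ∀ c : ℝ, 0 < c → c • B' ⊆ B' := by
    intro c hc x hx
    obtain ⟨y, hy, rfl⟩ := hx
    have : (c • (y : E)) ∈ B := hBcone c hc ⟨_, hy, rfl⟩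
    simpa [hB', Set.mem_preimage] using this
  set w : ℝ → ℝ≥0∞ := fun t => ∫⁻ r : Ioi (0:ℝ), {p : ℝ | t^2 + p^2 ≤ 1}.indicator 1 ↑r
      ∂(Measure.volumeIoiPow (Module.finrank ℝ ↥Vᗮ - 1)) with hw
  have hwmeas : Measurable w := by
    have hanti : Antitone (fun s : ℝ => ∫⁻ r : Ioi (0:ℝ), {p : ℝ | s + p^2 ≤ 1}.indicator 1 ↑r
        ∂(Measure.volumeIoiPow (Module.finrank ℝ ↥Vᗮ - 1))) := by
      intro s s' hss'
      refine lintegral_mono fun r => ?_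
      refine Set.indicator_le_indicator_of_subset ?_ (fun _ => zero_le) _
      intro p hp
      simp only [Set.mem_setOf_eq] at hp ⊢
      linarith
    exact hanti.measurable.comp ((measurable_id.pow_const 2))
  have hSm : MeasurableSet {p : ↥V × ↥Vᗮ | ‖p.1‖^2 + ‖p.2‖^2 ≤ 1} := by
    refine measurableSet_le ?_ measurable_const
    exact ((measurable_fst.norm.pow_const 2).add (measurable_snd.norm.pow_const 2))
  have hslice : ∀ x : ↥V,
      (volume : Measure ↥Vᗮ)
          (B' ∩ ((fun y : ↥Vᗮ => ‖y‖) ⁻¹' {p : ℝ | ‖x‖^2 + p^2 ≤ 1}))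
        = (volume : Measure ↥Vᗮ).toSphere ((↑) ⁻¹' B' : Set (sphere (0:↥Vᗮ) 1)) * w ‖x‖ := by
    intro x
    have hpm : MeasurableSet {p : ℝ | ‖x‖^2 + p^2 ≤ 1} := by
      refine measurableSet_le ?_ measurable_const
      exact measurable_const.add (measurable_id.pow_const 2)
    have hgm : Measurable ({p : ℝ | ‖x‖^2 + p^2 ≤ 1}.indicator (1 : ℝ → ℝ≥0∞)) :=
      measurable_one.indicator hpm
    have hym : MeasurableSet ((fun y : ↥Vᗮ => ‖y‖) ⁻¹' {p : ℝ | ‖x‖^2 + p^2 ≤ 1}) :=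
      hpm.preimage measurable_norm
    calc (volume : Measure ↥Vᗮ)
          (B' ∩ ((fun y : ↥Vᗮ => ‖y‖) ⁻¹' {p : ℝ | ‖x‖^2 + p^2 ≤ 1}))
        = ∫⁻ y, B'.indicator 1 y * {p : ℝ | ‖x‖^2 + p^2 ≤ 1}.indicator 1 ‖y‖
            ∂(volume : Measure ↥Vᗮ) := by
          rw [← lintegral_indicator_one (hB'm.inter hym)]
          refine lintegral_congr fun y => ?_
          rw [Set.inter_indicator_one, Pi.mul_apply]
          congr 1
      _ = (volume : Measure ↥Vᗮ).toSphere ((↑) ⁻¹' B' : Set (sphere (0:↥Vᗮ) 1)) * w ‖x‖ :=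
          cone_radial hB'm hB'cone hgm
  have hpre : Ψ ⁻¹' ((A + B) ∩ closedBall (0:E) 1)
      = (A' ×ˢ B') ∩ {p : ↥V × ↥Vᗮ | ‖p.1‖^2 + ‖p.2‖^2 ≤ 1} := by
    ext p
    have hnorm : ‖((p.1 : ↥V) : E) + ((p.2 : ↥Vᗮ) : E)‖^2 = ‖p.1‖^2 + ‖p.2‖^2 := by
      rw [norm_add_sq_real, Submodule.inner_right_of_mem_orthogonal p.1.2 p.2.2]
      simp
    simp only [Set.mem_preimage, hΨeq, Set.mem_inter_iff, Set.mem_prod,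
      mem_closedBall_zero_iff, Set.mem_setOf_eq]
    constructor
    · rintro ⟨hmem, hle⟩
      rw [Set.mem_add] at hmem
      obtain ⟨a, ha, b, hb, hab⟩ := hmem
      have haV : a ∈ V := hAV ha
      have hbW : b ∈ Vᗮ := hBW hb
      have heq : a - ((p.1:↥V):E) = ((p.2:↥Vᗮ):E) - b := by
        rw [sub_eq_sub_iff_add_eq_add]
        rw [hab]
        abel
      have hdiff : a - ((p.1 : ↥V) : E) = 0 := by
        have hmemV : a - ((p.1:↥V):E) ∈ V := V.sub_mem haV p.1.2
        have hmemW : a - ((p.1:↥V):E) ∈ Vᗮ := by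
          rw [heq]; exact Vᗮ.sub_mem p.2.2 hbW
        exact (Submodule.disjoint_def.mp hcompl.disjoint _ hmemV hmemW)
      have ha' : a = ((p.1:↥V):E) := sub_eq_zero.mp hdiff
      have hb' : b = ((p.2:↥Vᗮ):E) := by
        rw [ha'] at hab
        exact add_left_cancel hab
      refine ⟨⟨?_, ?_⟩, ?_⟩
      · show ((p.1:↥V):E) ∈ A
        rw [← ha']; exact ha
      · show ((p.2:↥Vᗮ):E) ∈ B
        rw [← hb']; exact hb
      · rw [← hnorm]
        exact pow_le_one₀ (norm_nonneg _) hle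
    · rintro ⟨⟨hp1, hp2⟩, hle⟩
      refine ⟨Set.mem_add.mpr ⟨_, hp1, _, hp2, rfl⟩, ?_⟩
      rw [← hnorm] at hle
      exact (pow_le_one_iff_of_nonneg (norm_nonneg _) two_ne_zero).mp hle
  have hprodm : MeasurableSet ((A' ×ˢ B') ∩ {p : ↥V × ↥Vᗮ | ‖p.1‖^2 + ‖p.2‖^2 ≤ 1}) :=
    (hA'm.prod hB'm).inter hSm
  calc volume ((A + B) ∩ closedBall (0:E) 1)
      = ((volume : Measure ↥V).prod (volume : Measure ↥Vᗮ))
          ((A' ×ˢ B') ∩ {p : ↥V × ↥Vᗮ | ‖p.1‖^2 + ‖p.2‖^2 ≤ 1}) := by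
        rw [← hΨp.map_eq, MeasurableEquiv.map_apply, hpre]
    _ = ∫⁻ x : ↥V, (volume : Measure ↥Vᗮ)
          (Prod.mk x ⁻¹' ((A' ×ˢ B') ∩ {p : ↥V × ↥Vᗮ | ‖p.1‖^2 + ‖p.2‖^2 ≤ 1}))
          ∂(volume : Measure ↥V) := Measure.prod_apply hprodm
    _ = ∫⁻ x : ↥V, (volume : Measure ↥Vᗮ).toSphere
            ((↑) ⁻¹' B' : Set (sphere (0:↥Vᗮ) 1)) * (A'.indicator 1 x * w ‖x‖)
          ∂(volume : Measure ↥V) := by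
        refine lintegral_congr fun x => ?_
        by_cases hx : x ∈ A'
        · have hset : Prod.mk x ⁻¹' ((A' ×ˢ B') ∩ {p : ↥V × ↥Vᗮ | ‖p.1‖^2 + ‖p.2‖^2 ≤ 1})
              = B' ∩ ((fun y : ↥Vᗮ => ‖y‖) ⁻¹' {p : ℝ | ‖x‖^2 + p^2 ≤ 1}) := by
            ext y
            simp only [Set.mem_preimage, Set.mem_inter_iff, Set.mem_prod, Set.mem_setOf_eq]
            tauto
          rw [hset, hslice x, Set.indicator_of_mem hx]
          simp [mul_comm, mul_left_comm]
        · have hset : Prod.mk x ⁻¹' ((A' ×ˢ B') ∩ {p : ↥V × ↥Vᗮ | ‖p.1‖^2 + ‖p.2‖^2 ≤ 1})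
              = ∅ := by
            ext y
            simp [hx]
          rw [hset, Set.indicator_of_notMem hx]
          simp
    _ = (volume : Measure ↥Vᗮ).toSphere ((↑) ⁻¹' B' : Set (sphere (0:↥Vᗮ) 1))
          * ∫⁻ x : ↥V, A'.indicator 1 x * w ‖x‖ ∂(volume : Measure ↥V) := by
        rw [lintegral_const_mul]
        exact (measurable_one.indicator hA'm).mul (hwmeas.comp measurable_norm)
    _ = (volume : Measure ↥Vᗮ).toSphere ((↑) ⁻¹' B' : Set (sphere (0:↥Vᗮ) 1))
          * ((volume : Measure ↥V).toSphere ((↑) ⁻¹' A' : Set (sphere (0:↥V) 1))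
              * ∫⁻ s : Ioi (0:ℝ), w ↑s ∂(Measure.volumeIoiPow (Module.finrank ℝ ↥V - 1))) := by
        rw [cone_radial hA'm hA'cone hwmeas]
    _ = (volume : Measure ↥V).toSphere ((↑) ⁻¹' A' : Set (sphere (0:↥V) 1))
        * (volume : Measure ↥Vᗮ).toSphere ((↑) ⁻¹' B' : Set (sphere (0:↥Vᗮ) 1))
        * ∫⁻ s : Ioi (0:ℝ), (∫⁻ r : Ioi (0:ℝ),
              {p : ℝ | (s:ℝ)^2 + p^2 ≤ 1}.indicator 1 ↑r
                ∂(Measure.volumeIoiPow (Module.finrank ℝ ↥Vᗮ - 1)))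
            ∂(Measure.volumeIoiPow (Module.finrank ℝ ↥V - 1)) := by
        rw [show (∫⁻ s : Ioi (0:ℝ), w ↑s ∂(Measure.volumeIoiPow (Module.finrank ℝ ↥V - 1)))
            = ∫⁻ s : Ioi (0:ℝ), (∫⁻ r : Ioi (0:ℝ),
              {p : ℝ | (s:ℝ)^2 + p^2 ≤ 1}.indicator 1 ↑r
                ∂(Measure.volumeIoiPow (Module.finrank ℝ ↥Vᗮ - 1)))
            ∂(Measure.volumeIoiPow (Module.finrank ℝ ↥V - 1)) from lintegral_congr fun s => by rw [hw]]
        ring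


end ConeVol

/-- product cones.  Let `V ≤ ℝ^d` with `1 ≤ dim V ≤ d-1`,
`W = V^⊥`, and let `A ⊆ V`, `B ⊆ W` be measurable cones.  Then the volume fraction of
`A + B` in `ℝ^d` is the product of the volume fraction of `A` in `V` and that of `B`
in `W`. -/
theorem cone_product_volume {d : ℕ} (V : Submodule ℝ (Euc d))
    (h1 : 1 ≤ Module.finrank ℝ V) (h2 : Module.finrank ℝ V ≤ d - 1)
    (A B : Set (Euc d))
    (hAV : A ⊆ (V : Set (Euc d))) (hBW : B ⊆ (Vᗮ : Set (Euc d)))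
    (hAm : MeasurableSet A) (hBm : MeasurableSet B)
    -- `A` and `B` are cones (closed under multiplication by positive scalars):
    (hAcone : ∀ c : ℝ, 0 < c → c • A ⊆ A) (hBcone : ∀ c : ℝ, 0 < c → c • B ⊆ B) :
    (volume ((A + B) ∩ closedBall (0 : Euc d) 1)).toReal /
        (volume (closedBall (0 : Euc d) 1)).toReal
      = ((volume ((Subtype.val ⁻¹' A : Set ↥V) ∩ closedBall (0 : ↥V) 1)).toReal /
            (volume (closedBall (0 : ↥V) 1)).toReal)
        * ((volume ((Subtype.val ⁻¹' B : Set ↥Vᗮ) ∩ closedBall (0 : ↥Vᗮ) 1)).toReal /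
            (volume (closedBall (0 : ↥Vᗮ) 1)).toReal) := by
  classical
  have hd : Module.finrank ℝ (Euc d) = d := finrank_euclideanSpace_fin
  have hsum : Module.finrank ℝ ↥V + Module.finrank ℝ ↥Vᗮ = Module.finrank ℝ (Euc d) :=
    V.finrank_add_finrank_orthogonal
  rw [hd] at hsum
  have h1' : 0 < Module.finrank ℝ ↥V := h1
  have h2' : 0 < Module.finrank ℝ ↥Vᗮ := by omega
  haveI : Nontrivial ↥V := Module.nontrivial_of_finrank_pos h1'
  haveI : Nontrivial ↥Vᗮ := Module.nontrivial_of_finrank_pos h2'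
  have hVm : MeasurableSet (V : Set (Euc d)) :=
    (Submodule.closed_of_finiteDimensional V).measurableSet
  have hWm : MeasurableSet (Vᗮ : Set (Euc d)) :=
    (Submodule.closed_of_finiteDimensional Vᗮ).measurableSet
  have hVcone : ∀ c : ℝ, 0 < c → c • (V : Set (Euc d)) ⊆ (V : Set (Euc d)) := by
    rintro c hc x ⟨y, hy, rfl⟩; exact V.smul_mem c hy
  have hWcone : ∀ c : ℝ, 0 < c → c • (Vᗮ : Set (Euc d)) ⊆ (Vᗮ : Set (Euc d)) := by
    rintro c hc x ⟨y, hy, rfl⟩; exact Vᗮ.smul_mem c hy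
  have hVW : (V : Set (Euc d)) + (Vᗮ : Set (Euc d)) = Set.univ := by
    rw [← Submodule.coe_sup, Submodule.isCompl_orthogonal_of_hasOrthogonalProjection.sup_eq_top,
      Submodule.top_coe]
  -- preimages inside the subspaces
  have hA'm : MeasurableSet (Subtype.val ⁻¹' A : Set ↥V) :=
    hAm.preimage measurable_subtype_coe
  have hB'm : MeasurableSet (Subtype.val ⁻¹' B : Set ↥Vᗮ) :=
    hBm.preimage measurable_subtype_coe
  have hA'cone : ∀ c : ℝ, 0 < c → c • (Subtype.val ⁻¹' A : Set ↥V) ⊆ Subtype.val ⁻¹' A := by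
    rintro c hc x ⟨y, hy, rfl⟩
    have : (c • (y : Euc d)) ∈ A := hAcone c hc ⟨_, hy, rfl⟩
    simpa [Set.mem_preimage] using this
  have hB'cone : ∀ c : ℝ, 0 < c → c • (Subtype.val ⁻¹' B : Set ↥Vᗮ) ⊆ Subtype.val ⁻¹' B := by
    rintro c hc x ⟨y, hy, rfl⟩
    have : (c • (y : Euc d)) ∈ B := hBcone c hc ⟨_, hy, rfl⟩
    simpa [Set.mem_preimage] using this
  have hV'cone : ∀ c : ℝ, 0 < c →
      c • (Subtype.val ⁻¹' (V : Set (Euc d)) : Set ↥V) ⊆ Subtype.val ⁻¹' (V : Set (Euc d)) := by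
    rintro c hc x ⟨y, hy, rfl⟩
    simpa [Set.mem_preimage] using (V.smul_mem c (by simpa using hy))
  have hW'cone : ∀ c : ℝ, 0 < c →
      c • (Subtype.val ⁻¹' (Vᗮ : Set (Euc d)) : Set ↥Vᗮ) ⊆ Subtype.val ⁻¹' (Vᗮ : Set (Euc d)) := by
    rintro c hc x ⟨y, hy, rfl⟩
    simpa [Set.mem_preimage] using (Vᗮ.smul_mem c (by simpa using hy))
  have hV'univ : (Subtype.val ⁻¹' (V : Set (Euc d)) : Set ↥V) = Set.univ :=
    Set.eq_univ_of_forall fun x => x.2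
  have hW'univ : (Subtype.val ⁻¹' (Vᗮ : Set (Euc d)) : Set ↥Vᗮ) = Set.univ :=
    Set.eq_univ_of_forall fun x => x.2
  -- notations for the sphere measures and radial integrals
  set τA := (volume : Measure ↥V).toSphere
      ((↑) ⁻¹' (Subtype.val ⁻¹' A : Set ↥V) : Set (sphere (0:↥V) 1)) with hτA
  set τB := (volume : Measure ↥Vᗮ).toSphere
      ((↑) ⁻¹' (Subtype.val ⁻¹' B : Set ↥Vᗮ) : Set (sphere (0:↥Vᗮ) 1)) with hτB
  set τV := (volume : Measure ↥V).toSphere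
      ((↑) ⁻¹' (Set.univ : Set ↥V) : Set (sphere (0:↥V) 1)) with hτV
  set τW := (volume : Measure ↥Vᗮ).toSphere
      ((↑) ⁻¹' (Set.univ : Set ↥Vᗮ) : Set (sphere (0:↥Vᗮ) 1)) with hτW
  set vn := ∫⁻ r : Set.Ioi (0:ℝ), (Set.Iic (1:ℝ)).indicator 1 ↑r
      ∂(Measure.volumeIoiPow (Module.finrank ℝ ↥V - 1)) with hvn
  set vm := ∫⁻ r : Set.Ioi (0:ℝ), (Set.Iic (1:ℝ)).indicator 1 ↑r
      ∂(Measure.volumeIoiPow (Module.finrank ℝ ↥Vᗮ - 1)) with hvm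
  set C := ∫⁻ s : Set.Ioi (0:ℝ), (∫⁻ r : Set.Ioi (0:ℝ),
        {p : ℝ | (s:ℝ)^2 + p^2 ≤ 1}.indicator 1 ↑r
          ∂(Measure.volumeIoiPow (Module.finrank ℝ ↥Vᗮ - 1)))
      ∂(Measure.volumeIoiPow (Module.finrank ℝ ↥V - 1)) with hC
  -- the five key identities
  have E1 : volume ((A + B) ∩ closedBall (0 : Euc d) 1) = τA * τB * C := by
    rw [hτA, hτB, hC]
    exact ConeVol.cone_sum_volume V h1' h2' hAV hBW hAm hBm hAcone hBcone
  have E2 : volume (closedBall (0 : Euc d) 1) = τV * τW * C := by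
    have := ConeVol.cone_sum_volume V h1' h2' (subset_refl (V : Set (Euc d)))
      (subset_refl (Vᗮ : Set (Euc d))) hVm hWm hVcone hWcone
    rw [hVW, Set.univ_inter, hV'univ, hW'univ] at this
    rw [hτV, hτW, hC]
    exact this
  have E3 : volume ((Subtype.val ⁻¹' A : Set ↥V) ∩ closedBall (0 : ↥V) 1) = τA * vn := by
    rw [hτA, hvn]
    exact ConeVol.cone_ball hA'm hA'cone
  have E4 : volume (closedBall (0 : ↥V) 1) = τV * vn := by
    have := ConeVol.cone_ball (E := ↥V) (hVm.preimage measurable_subtype_coe) hV'cone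
    rw [hV'univ, Set.univ_inter] at this
    rw [hτV, hvn]
    exact this
  have E5 : volume ((Subtype.val ⁻¹' B : Set ↥Vᗮ) ∩ closedBall (0 : ↥Vᗮ) 1) = τB * vm := by
    rw [hτB, hvm]
    exact ConeVol.cone_ball hB'm hB'cone
  have E6 : volume (closedBall (0 : ↥Vᗮ) 1) = τW * vm := by
    have := ConeVol.cone_ball (hWm.preimage measurable_subtype_coe) hW'cone
    rw [hW'univ, Set.univ_inter] at this
    rw [hτW, hvm]
    exact this
  -- positivity and finiteness
  have key : ∀ {a b : ℝ≥0∞}, a * b ≠ 0 → a * b ≠ ⊤ →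
      (a ≠ 0 ∧ a ≠ ⊤) ∧ (b ≠ 0 ∧ b ≠ ⊤) := by
    intro a b h0 ht
    have h0' : a ≠ 0 ∧ b ≠ 0 := by
      constructor <;> intro h <;> apply h0 <;> simp [h]
    refine ⟨⟨h0'.1, ?_⟩, ⟨h0'.2, ?_⟩⟩ <;> intro h <;> apply ht <;>
      simp [h, ENNReal.top_mul, ENNReal.mul_top, h0'.1, h0'.2]
  have hpos4 : τV * vn ≠ 0 := by
    rw [← E4]; exact (measure_closedBall_pos _ _ one_pos).ne'
  have hfin4 : τV * vn ≠ ⊤ := by rw [← E4]; exact measure_closedBall_lt_top.ne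
  have hpos6 : τW * vm ≠ 0 := by
    rw [← E6]; exact (measure_closedBall_pos _ _ one_pos).ne'
  have hfin6 : τW * vm ≠ ⊤ := by rw [← E6]; exact measure_closedBall_lt_top.ne
  have hpos2 : τV * τW * C ≠ 0 := by
    rw [← E2]; exact (measure_closedBall_pos _ _ one_pos).ne'
  have hfin2 : τV * τW * C ≠ ⊤ := by rw [← E2]; exact measure_closedBall_lt_top.ne
  have h4 := key hpos4 hfin4
  have h6 := key hpos6 hfin6
  have hCf := (key (a := τV * τW) (b := C) hpos2 hfin2).2
  have hτV : τV.toReal ≠ 0 := ENNReal.toReal_ne_zero.mpr ⟨h4.1.1, h4.1.2⟩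
  have hvn' : vn.toReal ≠ 0 := ENNReal.toReal_ne_zero.mpr ⟨h4.2.1, h4.2.2⟩
  have hτW : τW.toReal ≠ 0 := ENNReal.toReal_ne_zero.mpr ⟨h6.1.1, h6.1.2⟩
  have hvm' : vm.toReal ≠ 0 := ENNReal.toReal_ne_zero.mpr ⟨h6.2.1, h6.2.2⟩
  have hC' : C.toReal ≠ 0 := ENNReal.toReal_ne_zero.mpr ⟨hCf.1, hCf.2⟩
  rw [E1, E2, E3, E4, E5, E6]
  simp only [ENNReal.toReal_mul]
  field_simp
end
end

section
/- (Rota) Let 𝒜 be a central hyperplane arrangement in ℝ^d. Then for every x ∈ L(𝒜), (−1)^{d − dim x} μ(x) > 0; in particular, the nonzero coefficients of the characteristic polynomial χ_𝒜(t) strictly alternate in sign. -/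
/-!
Formalization of statements from "Projection Volumes of Hyperplane Arrangements"
by Klivans and Swartz.
-/

open scoped RealInnerProductSpace Pointwise
open MeasureTheory Metric Set

noncomputable section

attribute [local instance] Classical.decEq Classical.propDecidable

variable {E : Type*} [NormedAddCommGroup E] [InnerProductSpace ℝ E] [FiniteDimensional ℝ E]
  [MeasurableSpace E] [BorelSpace E]

section RotaAux

variable {d : ℕ}

/-- The crosscut sum `∑_{S ⊆ 𝒜, ∩S = x} (-1)^|S|`, which we show equals `μ(x)`. -/
def nuA (A : Finset (Submodule ℝ (Euc d))) (x : Submodule ℝ (Euc d)) : ℤ :=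
  ∑ S ∈ A.powerset.filter (fun S => S.inf id = x), (-1 : ℤ) ^ S.card

lemma hyp_ne_top {H : Submodule ℝ (Euc d)} (h : IsLinearHyperplane H) : H ≠ ⊤ := by
  obtain ⟨η, hη, rfl⟩ := h
  intro hcon
  have hmem : η ∈ (Submodule.span ℝ {η})ᗮ := hcon ▸ Submodule.mem_top
  exact hη (inner_self_eq_zero.mp
    ((Submodule.mem_orthogonal _ _).mp hmem η (Submodule.mem_span_singleton_self η)))

lemma hyp_finrank {H : Submodule ℝ (Euc d)} (h : IsLinearHyperplane H) :
    Module.finrank ℝ H + 1 = d := by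
  obtain ⟨η, hη, rfl⟩ := h
  have h1 : Module.finrank ℝ (Submodule.span ℝ {η} : Submodule ℝ (Euc d)) = 1 :=
    finrank_span_singleton hη
  have h2 := Submodule.finrank_add_finrank_orthogonal
    (K := (Submodule.span ℝ {η} : Submodule ℝ (Euc d)))
  have h3 : Module.finrank ℝ (Euc d) = d := finrank_euclideanSpace_fin
  omega

lemma finrank_le_inf_hyp {H : Submodule ℝ (Euc d)} (h : IsLinearHyperplane H)
    (y : Submodule ℝ (Euc d)) :
    Module.finrank ℝ y ≤ Module.finrank ℝ (y ⊓ H : Submodule ℝ (Euc d)) + 1 := by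
  have hd := Submodule.finrank_sup_add_finrank_inf_eq y H
  have h2 : Module.finrank ℝ (y ⊔ H : Submodule ℝ (Euc d)) ≤ d :=
    (Submodule.finrank_le _).trans_eq finrank_euclideanSpace_fin
  have h3 := hyp_finrank h
  omega

lemma finrank_le_d (y : Submodule ℝ (Euc d)) : Module.finrank ℝ y ≤ d :=
  (Submodule.finrank_le _).trans_eq finrank_euclideanSpace_fin

lemma mem_interPoset_iff {A : Finset (Submodule ℝ (Euc d))} {x : Submodule ℝ (Euc d)} :
    x ∈ interPoset A ↔ ∃ S, S ⊆ A ∧ S.inf id = x := by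
  simp [interPoset, Finset.mem_image, Finset.mem_powerset]

lemma top_mem_interPoset (A : Finset (Submodule ℝ (Euc d))) : ⊤ ∈ interPoset A :=
  mem_interPoset_iff.mpr ⟨∅, by simp, by simp⟩

lemma nuA_eq_zero {A : Finset (Submodule ℝ (Euc d))} {x : Submodule ℝ (Euc d)}
    (hx : x ∉ interPoset A) : nuA A x = 0 := by
  rw [nuA]
  rw [Finset.filter_eq_empty_iff.mpr, Finset.sum_empty]
  intro S hS hSx
  exact hx (mem_interPoset_iff.mpr ⟨S, Finset.mem_powerset.mp hS, hSx⟩)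

/-- Key deletion identity plus Rota's sign theorem for the crosscut sum. -/
lemma nuA_sign : ∀ (A : Finset (Submodule ℝ (Euc d))),
    (∀ H ∈ A, IsLinearHyperplane H) → ∀ x ∈ interPoset A,
    0 < (-1 : ℤ) ^ (d - Module.finrank ℝ x) * nuA A x := by
  intro A
  induction A using Finset.strongInduction with
  | _ A ih =>
  intro hA x hx
  by_cases hxt : x = ⊤
  · subst hxt
    have h1 : d - Module.finrank ℝ (⊤ : Submodule ℝ (Euc d)) = 0 := by
      have : Module.finrank ℝ (⊤ : Submodule ℝ (Euc d)) = d := by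
        rw [finrank_top]; exact finrank_euclideanSpace_fin
      omega
    have h2 : nuA A ⊤ = 1 := by
      have hfil : A.powerset.filter (fun S => S.inf id = (⊤ : Submodule ℝ (Euc d))) = {∅} := by
        ext S
        simp only [Finset.mem_filter, Finset.mem_powerset, Finset.mem_singleton]
        constructor
        · rintro ⟨hSA, hinf⟩
          by_contra hne
          obtain ⟨H, hH⟩ := Finset.nonempty_iff_ne_empty.mpr hne
          have hle : S.inf id ≤ H := Finset.inf_le hH
          rw [hinf] at hle
          exact hyp_ne_top (hA H (hSA hH)) (top_le_iff.mp hle)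
        · rintro rfl
          exact ⟨Finset.empty_subset _, Finset.inf_empty⟩
      rw [nuA, hfil, Finset.sum_singleton, Finset.card_empty, pow_zero]
    rw [h1, h2]
    norm_num
  · -- nontrivial case
    obtain ⟨S', hS'A, hS'inf⟩ := mem_interPoset_iff.mp hx
    have hTne : (A.powerset.filter (fun S => S.inf id = x)).Nonempty :=
      ⟨S', Finset.mem_filter.mpr ⟨Finset.mem_powerset.mpr hS'A, hS'inf⟩⟩
    obtain ⟨S₀, hS₀T, hS₀min⟩ := Finset.exists_min_image _ Finset.card hTne
    obtain ⟨hS₀A, hS₀inf⟩ := Finset.mem_filter.mp hS₀T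
    have hS₀A' : S₀ ⊆ A := Finset.mem_powerset.mp hS₀A
    have hS₀ne : S₀.Nonempty := by
      rw [Finset.nonempty_iff_ne_empty]
      rintro rfl
      exact hxt (hS₀inf.symm.trans Finset.inf_empty)
    obtain ⟨H, hHS₀⟩ := hS₀ne
    have hHA : H ∈ A := hS₀A' hHS₀
    have hHhyp : IsLinearHyperplane H := hA H hHA
    have hxH : x ≤ H := by
      rw [← hS₀inf]; exact Finset.inf_le hHS₀
    set A' := A.erase H with hA'def
    have hHA' : H ∉ A' := Finset.notMem_erase H A
    have hins : A = insert H A' := (Finset.insert_erase hHA).symm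
    -- the key deletion identity
    set F := (interPoset A').filter (fun y => y ⊓ H = x ∧ y ≠ x) with hFdef
    have key : nuA A x = - ∑ y ∈ F, nuA A' y := by
      have e1 : nuA A x = (∑ S ∈ A'.powerset, (if S.inf id = x then ((-1:ℤ)) ^ S.card else 0))
          + ∑ S ∈ A'.powerset,
              (if (insert H S).inf id = x then ((-1:ℤ)) ^ (insert H S).card else 0) := by
        rw [nuA, Finset.sum_filter, hins, Finset.sum_powerset_insert hHA']
      have e2 : ∑ S ∈ A'.powerset,
            (if (insert H S).inf id = x then ((-1:ℤ)) ^ (insert H S).card else 0)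
          = - ∑ S ∈ A'.powerset, (if S.inf id ⊓ H = x then ((-1:ℤ)) ^ S.card else 0) := by
        rw [← Finset.sum_neg_distrib]
        refine Finset.sum_congr rfl fun S hS => ?_
        have hHS : H ∉ S := fun h => hHA' (Finset.mem_powerset.mp hS h)
        have hc : (insert H S).inf id = S.inf id ⊓ H := by
          rw [Finset.inf_insert, id_eq, inf_comm]
        rw [hc, Finset.card_insert_of_notMem hHS]
        by_cases hcc : S.inf id ⊓ H = x
        · rw [if_pos hcc, if_pos hcc, pow_succ]
          ring
        · rw [if_neg hcc, if_neg hcc, neg_zero]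
      have e3 : ∑ S ∈ A'.powerset, (if S.inf id ⊓ H = x then ((-1:ℤ)) ^ S.card else 0)
          = ∑ y ∈ interPoset A', (if y ⊓ H = x then nuA A' y else 0) := by
        rw [← Finset.sum_fiberwise_of_maps_to (g := fun S : Finset (Submodule ℝ (Euc d)) => S.inf id)
          (t := interPoset A') (fun S hS => Finset.mem_image_of_mem _ hS)]
        refine Finset.sum_congr rfl fun y hy => ?_
        by_cases hyx : y ⊓ H = x
        · rw [if_pos hyx, nuA]
          refine Finset.sum_congr rfl fun S hS => ?_
          rw [if_pos (by rw [(Finset.mem_filter.mp hS).2]; exact hyx)]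
        · rw [if_neg hyx]
          refine Finset.sum_eq_zero fun S hS => ?_
          rw [if_neg (by rw [(Finset.mem_filter.mp hS).2]; exact hyx)]
      have e4 : ∑ y ∈ interPoset A', (if y ⊓ H = x then nuA A' y else 0)
          = nuA A' x + ∑ y ∈ F, nuA A' y := by
        rw [← Finset.sum_filter]
        by_cases hxA' : x ∈ interPoset A'
        · have hxmem : x ∈ (interPoset A').filter (fun y => y ⊓ H = x) :=
            Finset.mem_filter.mpr ⟨hxA', inf_eq_left.mpr hxH⟩
          rw [← Finset.add_sum_erase _ _ hxmem]
          congr 1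
          refine Finset.sum_congr ?_ fun _ _ => rfl
          ext y
          simp only [hFdef, Finset.mem_erase, Finset.mem_filter]
          tauto
        · rw [nuA_eq_zero hxA', zero_add]
          refine Finset.sum_congr ?_ fun _ _ => rfl
          ext y
          simp only [hFdef, Finset.mem_filter]
          constructor
          · rintro ⟨hy, hyx⟩
            exact ⟨hy, hyx, fun h => hxA' (h ▸ hy)⟩
          · rintro ⟨hy, hyx, _⟩
            exact ⟨hy, hyx⟩
      have e5 : (∑ S ∈ A'.powerset, (if S.inf id = x then ((-1:ℤ)) ^ S.card else 0))
          = nuA A' x := by rw [nuA, Finset.sum_filter]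
      rw [e1, e2, e3, e4, e5]
      ring
    -- F is nonempty
    have hFne : F.Nonempty := by
      refine ⟨(S₀.erase H).inf id, Finset.mem_filter.mpr ⟨?_, ?_, ?_⟩⟩
      · exact mem_interPoset_iff.mpr ⟨S₀.erase H, Finset.erase_subset_erase H hS₀A', rfl⟩
      · rw [← hS₀inf]
        conv_rhs => rw [← Finset.insert_erase hHS₀]
        rw [Finset.inf_insert, id_eq, inf_comm]
      · intro hcon
        have hmem : S₀.erase H ∈ A.powerset.filter (fun S => S.inf id = x) :=
          Finset.mem_filter.mpr
            ⟨Finset.mem_powerset.mpr ((Finset.erase_subset H S₀).trans hS₀A'), hcon⟩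
        have := hS₀min _ hmem
        have hlt : (S₀.erase H).card < S₀.card := Finset.card_erase_lt_of_mem hHS₀
        omega
    -- ranks
    have hfx : Module.finrank ℝ x < d := by
      have h := Submodule.finrank_lt (s := x) hxt
      rwa [finrank_euclideanSpace_fin] at h
    have hrank : ∀ y ∈ F, Module.finrank ℝ y = Module.finrank ℝ x + 1 := by
      intro y hy
      obtain ⟨hyL, hyx, hyne⟩ := Finset.mem_filter.mp hy
      have hxy : x < y := lt_of_le_of_ne (hyx ▸ inf_le_left) (fun h => hyne h.symm)
      have h1 : Module.finrank ℝ x < Module.finrank ℝ y :=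
        Submodule.finrank_lt_finrank_of_lt hxy
      have h2 : Module.finrank ℝ y ≤ Module.finrank ℝ (y ⊓ H : Submodule ℝ (Euc d)) + 1 :=
        finrank_le_inf_hyp hHhyp y
      rw [hyx] at h2
      omega
    -- put signs together
    have hppow : (-1:ℤ) ^ (d - Module.finrank ℝ x)
        = -(-1:ℤ) ^ (d - Module.finrank ℝ x - 1) := by
      have hk : d - Module.finrank ℝ x - 1 + 1 = d - Module.finrank ℝ x := by omega
      calc (-1:ℤ) ^ (d - Module.finrank ℝ x)
          = (-1:ℤ) ^ (d - Module.finrank ℝ x - 1 + 1) := by rw [hk]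
        _ = -(-1:ℤ) ^ (d - Module.finrank ℝ x - 1) := by rw [pow_succ]; ring
    rw [key, hppow]
    have : (-(-1:ℤ) ^ (d - Module.finrank ℝ x - 1)) * (-∑ y ∈ F, nuA A' y)
        = ∑ y ∈ F, (-1:ℤ) ^ (d - Module.finrank ℝ x - 1) * nuA A' y := by
      rw [neg_mul_neg, Finset.mul_sum]
    rw [this]
    refine Finset.sum_pos (fun y hy => ?_) hFne
    have hy' := (Finset.mem_filter.mp hy).1
    have := ih A' (Finset.erase_ssubset hHA) (fun K hK => hA K (Finset.mem_of_mem_erase hK)) y hy'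
    have hr : d - Module.finrank ℝ y = d - Module.finrank ℝ x - 1 := by
      have := hrank y hy
      omega
    rwa [hr] at this

lemma le_inf_iff_subset_filter {A : Finset (Submodule ℝ (Euc d))} {x : Submodule ℝ (Euc d)}
    {S : Finset (Submodule ℝ (Euc d))} :
    x ≤ S.inf id ↔ ∀ H ∈ S, x ≤ H := by
  rw [Finset.le_inf_iff]
  simp [id_eq]

lemma filter_eq_empty_iff_top {A : Finset (Submodule ℝ (Euc d))}
    (hA : ∀ H ∈ A, IsLinearHyperplane H) {x : Submodule ℝ (Euc d)} (hx : x ∈ interPoset A) :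
    A.filter (fun H => x ≤ H) = ∅ ↔ x = ⊤ := by
  constructor
  · intro h
    obtain ⟨S, hSA, hSinf⟩ := mem_interPoset_iff.mp hx
    have hSsub : S ⊆ A.filter (fun H => x ≤ H) := fun K hK =>
      Finset.mem_filter.mpr ⟨hSA hK, hSinf ▸ Finset.inf_le hK⟩
    rw [h, Finset.subset_empty] at hSsub
    rw [← hSinf, hSsub, Finset.inf_empty]
  · rintro rfl
    rw [Finset.filter_eq_empty_iff]
    intro H hH hle
    exact hyp_ne_top (hA H hH) (top_le_iff.mp hle)

/-- `nuA` satisfies the defining recursion of the Möbius function. -/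
lemma sum_nuA_rec (A : Finset (Submodule ℝ (Euc d))) (hA : ∀ H ∈ A, IsLinearHyperplane H)
    (x : Submodule ℝ (Euc d)) (hx : x ∈ interPoset A) :
    ∑ z ∈ (interPoset A).filter (fun z : Submodule ℝ (Euc d) => x ≤ z), nuA A z
      = if x = (⊤ : Submodule ℝ (Euc d)) then 1 else 0 := by
  have hmaps : ∀ S ∈ A.powerset, S.inf id ∈ interPoset A := fun S hS =>
    Finset.mem_image_of_mem _ hS
  have e1 : ∑ z ∈ (interPoset A).filter (fun z : Submodule ℝ (Euc d) => x ≤ z), nuA A z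
      = ∑ S ∈ A.powerset, (if x ≤ S.inf id then ((-1:ℤ)) ^ S.card else 0) := by
    rw [Finset.sum_filter, ← Finset.sum_fiberwise_of_maps_to
      (g := fun S : Finset (Submodule ℝ (Euc d)) => S.inf id) (t := interPoset A) hmaps]
    refine Finset.sum_congr rfl fun z hz => ?_
    by_cases h : x ≤ z
    · rw [if_pos h, nuA]
      refine Finset.sum_congr rfl fun S hS => ?_
      rw [if_pos (by rw [(Finset.mem_filter.mp hS).2]; exact h)]
    · rw [if_neg h]
      refine (Finset.sum_eq_zero fun S hS => ?_).symm
      rw [if_neg (by rw [(Finset.mem_filter.mp hS).2]; exact h)]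
  have e2 : ∑ S ∈ A.powerset, (if x ≤ S.inf id then ((-1:ℤ)) ^ S.card else 0)
      = ∑ S ∈ (A.filter (fun H => x ≤ H)).powerset, ((-1:ℤ)) ^ S.card := by
    rw [← Finset.sum_filter]
    refine Finset.sum_congr ?_ (fun _ _ => rfl)
    ext S
    simp only [Finset.mem_filter, Finset.mem_powerset, le_inf_iff_subset_filter (A := A)]
    constructor
    · rintro ⟨hSA, h⟩
      exact fun K hK => Finset.mem_filter.mpr ⟨hSA hK, h K hK⟩
    · intro h
      exact ⟨fun K hK => (Finset.mem_filter.mp (h hK)).1,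
        fun K hK => (Finset.mem_filter.mp (h hK)).2⟩
  rw [e1, e2, Finset.sum_powerset_neg_one_pow_card,
    if_congr (filter_eq_empty_iff_top hA hx) rfl rfl]

/-- Uniqueness of the Möbius function: `mu = nuA` on the intersection poset. -/
lemma mu_eq_nuA (A : Finset (Submodule ℝ (Euc d))) (hA : ∀ H ∈ A, IsLinearHyperplane H)
    (mu : Submodule ℝ (Euc d) → ℤ)
    (hmu : ∀ x ∈ interPoset A,
      ∑ z ∈ (interPoset A).filter (fun z : Submodule ℝ (Euc d) => x ≤ z), mu z
        = if x = (⊤ : Submodule ℝ (Euc d)) then 1 else 0) :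
    ∀ x ∈ interPoset A, mu x = nuA A x := by
  suffices h : ∀ n : ℕ, ∀ x ∈ interPoset A, d - Module.finrank ℝ x = n → mu x = nuA A x by
    intro x hx; exact h _ x hx rfl
  intro n
  induction n using Nat.strong_induction_on with
  | _ n ih =>
  intro x hx hxn
  have hsplit : ∀ f : Submodule ℝ (Euc d) → ℤ,
      ∑ z ∈ (interPoset A).filter (fun z : Submodule ℝ (Euc d) => x ≤ z), f z
        = f x + ∑ z ∈ (interPoset A).filter (fun z => x ≤ z ∧ z ≠ x), f z := by
    intro f
    have hset : (interPoset A).filter (fun z : Submodule ℝ (Euc d) => x ≤ z)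
        = insert x ((interPoset A).filter (fun z => x ≤ z ∧ z ≠ x)) := by
      ext z
      simp only [Finset.mem_filter, Finset.mem_insert]
      constructor
      · rintro ⟨hz, hle⟩
        by_cases h : z = x
        · exact Or.inl h
        · exact Or.inr ⟨hz, hle, h⟩
      · rintro (h | ⟨hz, hle, _⟩)
        · subst h; exact ⟨hx, le_refl _⟩
        · exact ⟨hz, hle⟩
    rw [hset, Finset.sum_insert (by simp)]
  have h1 := hmu x hx
  have h2 := sum_nuA_rec A hA x hx
  rw [hsplit] at h1 h2
  have h3 : ∑ z ∈ (interPoset A).filter (fun z => x ≤ z ∧ z ≠ x), mu z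
      = ∑ z ∈ (interPoset A).filter (fun z => x ≤ z ∧ z ≠ x), nuA A z := by
    refine Finset.sum_congr rfl fun z hz => ?_
    obtain ⟨hzL, hle, hne⟩ := Finset.mem_filter.mp hz
    refine ih (d - Module.finrank ℝ z) ?_ z hzL rfl
    have hlt : Module.finrank ℝ x < Module.finrank ℝ z :=
      Submodule.finrank_lt_finrank_of_lt (lt_of_le_of_ne hle (Ne.symm hne))
    have hzd := finrank_le_d z
    omega
  rw [h3] at h1
  linarith [h1, h2]

end RotaAux

/-- Rota.  For a central arrangement `𝒜` in `ℝ^d`,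
`(-1)^(d - dim x) μ(x) > 0` for every `x ∈ L(𝒜)`; in particular the nonzero
coefficients of the characteristic polynomial (the coefficient of `t^(r-d+k)` being
`a_k = ∑_{x ∈ L(𝒜), dim x = k} μ(x)`) strictly alternate in sign:
`(-1)^(d-k) a_k > 0` whenever `a_k ≠ 0`. -/
theorem moebius_alternates_in_sign {d : ℕ}
    (A : Finset (Submodule ℝ (Euc d))) (hA : ∀ H ∈ A, IsLinearHyperplane H)
    (mu : Submodule ℝ (Euc d) → ℤ)
    -- `mu` is the one-variable Möbius function `μ(x) = μ(ℝ^d, x)` of `L(𝒜)`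
    -- (ordered by reverse inclusion, with minimal element `⊤ = ℝ^d`),
    -- characterized by the defining recursion `∑_{⊤ ⊒ z ⊒ x} μ(z) = δ_{x,⊤}`:
    (hmu : ∀ x ∈ interPoset A,
      ∑ z ∈ (interPoset A).filter (fun z : Submodule ℝ (Euc d) => x ≤ z), mu z
        = if x = (⊤ : Submodule ℝ (Euc d)) then 1 else 0)
 :
    (∀ x ∈ interPoset A, 0 < (-1 : ℤ) ^ (d - Module.finrank ℝ x) * mu x)
    ∧ ∀ k : ℕ,
        (∑ x ∈ (interPoset A).filter
          (fun x : Submodule ℝ (Euc d) => Module.finrank ℝ x = k), mu x) ≠ 0 →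
        0 < (-1 : ℤ) ^ (d - k) *
          ∑ x ∈ (interPoset A).filter
            (fun x : Submodule ℝ (Euc d) => Module.finrank ℝ x = k), mu x := by

  have hmueq := mu_eq_nuA A hA mu hmu
  have hsign : ∀ x ∈ interPoset A, 0 < (-1 : ℤ) ^ (d - Module.finrank ℝ x) * mu x := by
    intro x hx
    rw [hmueq x hx]
    exact nuA_sign A hA x hx
  refine ⟨hsign, fun k hk => ?_⟩
  have hne : ((interPoset A).filter
      (fun x : Submodule ℝ (Euc d) => Module.finrank ℝ x = k)).Nonempty := by
    by_contra h
    rw [Finset.not_nonempty_iff_eq_empty] at h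
    rw [h, Finset.sum_empty] at hk
    exact hk rfl
  rw [Finset.mul_sum]
  refine Finset.sum_pos (fun x hxs => ?_) hne
  obtain ⟨hxL, hxk⟩ := Finset.mem_filter.mp hxs
  have := hsign x hxL
  rwa [hxk] at this
end
end

section
/- Let C ⊆ ℝ^d be a nonempty closed polyhedral set (a finite intersection of closed affine halfspaces) and let F be a face of C. Then for every a ∈ ℝ^d the limit lim_{r→∞} λ(B_r(a) ∩ X_F)/λ(B_r(a)) exists, and its value is independent of the choice of a, where B_r(a) is the closed ball of radius r centered at a and λ is Lebesgue measure. -/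
/-!
Formalization of statements from "Projection Volumes of Hyperplane Arrangements"
by Klivans and Swartz.
-/

open scoped RealInnerProductSpace Pointwise
open MeasureTheory Metric Set

noncomputable section
set_option linter.unusedSectionVars false

attribute [local instance] Classical.decEq Classical.propDecidable

variable {E : Type*} [NormedAddCommGroup E] [InnerProductSpace ℝ E] [FiniteDimensional ℝ E]
  [MeasurableSpace E] [BorelSpace E]

/-- A (closed) polyhedral set: a finite intersection of closed affine halfspaces. -/
def IsPolyhedralSet (C : Set E) : Prop :=
  ∃ (m : ℕ) (η : Fin m → E) (b : Fin m → ℝ), C = {z | ∀ i, ⟪η i, z⟫ ≤ b i}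

private lemma nearest_inner_le {C : Set E} (hC : Convex ℝ C) {z p : E}
    (h : IsNearestPt C z p) {q : E} (hq : q ∈ C) : ⟪z - p, q - p⟫ ≤ 0 := by
  have key : ∀ t : ℝ, 0 < t → t ≤ 1 → ⟪z - p, q - p⟫ ≤ t * (‖q - p‖ ^ 2 / 2) := by
    intro t ht ht1
    have hqt : p + t • (q - p) ∈ C := by
      have h2 := hC h.1 hq (by linarith : (0:ℝ) ≤ 1 - t) ht.le (by ring)
      convert h2 using 1
      module
    have hd := h.2 _ hqt
    rw [dist_eq_norm, dist_eq_norm] at hd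
    have hsq : ‖z - p‖ ^ 2 ≤ ‖z - (p + t • (q - p))‖ ^ 2 :=
      pow_le_pow_left₀ (norm_nonneg _) hd 2
    have hexp : ‖z - (p + t • (q - p))‖ ^ 2
        = ‖z - p‖ ^ 2 - 2 * (t * ⟪z - p, q - p⟫) + t ^ 2 * ‖q - p‖ ^ 2 := by
      have he : z - (p + t • (q - p)) = (z - p) - t • (q - p) := by module
      rw [he, norm_sub_sq_real, real_inner_smul_right, norm_smul]
      rw [mul_pow]
      simp [Real.norm_eq_abs, sq_abs]
    nlinarith [sq_nonneg t]
  have h0 : Filter.Tendsto (fun t : ℝ => t * (‖q - p‖ ^ 2 / 2))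
      (nhdsWithin 0 (Set.Ioi 0)) (nhds 0) := by
    have h1 := (continuous_id.mul (continuous_const (y := ‖q - p‖ ^ 2 / 2))).tendsto 0
    simpa [Pi.mul_def] using h1.mono_left nhdsWithin_le_nhds
  refine ge_of_tendsto h0 ?_
  filter_upwards [Ioc_mem_nhdsGT zero_lt_one] with t ht
  exact key t ht.1 ht.2

private lemma isNearestPt_of_inner {C : Set E} {z p : E} (hp : p ∈ C)
    (h : ∀ q ∈ C, ⟪z - p, q - p⟫ ≤ 0) : IsNearestPt C z p := by
  refine ⟨hp, fun q hq => ?_⟩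
  rw [dist_eq_norm, dist_eq_norm]
  have h2 : ‖z - p‖ ^ 2 ≤ ‖z - q‖ ^ 2 := by
    have he : z - q = (z - p) - (q - p) := by module
    have hns := norm_sub_sq_real (z - p) (q - p)
    rw [he, hns]
    nlinarith [h q hq, sq_nonneg ‖q - p‖]
  exact le_of_pow_le_pow_left₀ two_ne_zero (norm_nonneg _) h2

private lemma mem_of_ray {F : Set E} {p₁ p₂ : E}
    (h1 : p₁ ∈ intrinsicInterior ℝ F) (h2 : p₂ ∈ F) :
    ∃ ε : ℝ, 0 < ε ∧ p₁ + ε • (p₁ - p₂) ∈ F := by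
  obtain ⟨y, hy, hyx⟩ := mem_intrinsicInterior.1 h1
  have hp1 : p₁ ∈ affineSpan ℝ F := by rw [← hyx]; exact y.2
  have hp2 : p₂ ∈ affineSpan ℝ F := subset_affineSpan ℝ F h2
  have hmem : ∀ t : ℝ, p₁ + t • (p₁ - p₂) ∈ affineSpan ℝ F := by
    intro t
    have h3 := (affineSpan ℝ F).smul_vsub_vadd_mem t hp1 hp2 hp1
    simpa [vsub_eq_sub, vadd_eq_add, add_comm] using h3
  set γ : ℝ → affineSpan ℝ F := fun t => ⟨p₁ + t • (p₁ - p₂), hmem t⟩ with hγ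
  have hcont : Continuous γ := by
    apply Continuous.subtype_mk
    fun_prop
  have hopen : IsOpen (γ ⁻¹' interior ((↑) ⁻¹' F : Set (affineSpan ℝ F))) :=
    isOpen_interior.preimage hcont
  have h0 : (0:ℝ) ∈ γ ⁻¹' interior ((↑) ⁻¹' F : Set (affineSpan ℝ F)) := by
    have hg0 : γ 0 = y := Subtype.ext (by simp [hγ, hyx])
    simpa [mem_preimage, hg0] using hy
  obtain ⟨ε, hε, hball⟩ := Metric.isOpen_iff.1 hopen 0 h0
  refine ⟨ε/2, by linarith, ?_⟩
  have hmemball : (ε/2 : ℝ) ∈ ball (0:ℝ) ε := by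
    simp only [mem_ball, Real.dist_eq, sub_zero, abs_of_pos (by linarith : (0:ℝ) < ε/2)]
    linarith
  have h6 : γ (ε/2) ∈ ((↑) ⁻¹' F : Set (affineSpan ℝ F)) := interior_subset (hball hmemball)
  exact h6

private lemma combo_mem_intrinsicInterior {F : Set E} (hFconv : Convex ℝ F)
    {p₁ p₂ : E} (h1 : p₁ ∈ intrinsicInterior ℝ F) (h2 : p₂ ∈ F)
    {a b : ℝ} (ha : 0 < a) (hb : 0 ≤ b) (hab : a + b = 1) :
    a • p₁ + b • p₂ ∈ intrinsicInterior ℝ F := by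
  have hb' : b = 1 - a := by linarith
  subst hb'
  obtain ⟨y₁, hy₁, hy₁x⟩ := mem_intrinsicInterior.1 h1
  have hp2 : p₂ ∈ affineSpan ℝ F := subset_affineSpan ℝ F h2
  have hmemΦ : ∀ y : affineSpan ℝ F, a • (y:E) + (1-a) • p₂ ∈ affineSpan ℝ F := by
    intro y
    have h3 := (affineSpan ℝ F).smul_vsub_vadd_mem a y.2 hp2 hp2
    have he : a • ((y:E) -ᵥ p₂) +ᵥ p₂ = a • (y:E) + (1-a) • p₂ := by
      simp only [vsub_eq_sub, vadd_eq_add]; module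
    rwa [he] at h3
  have hmemΨ : ∀ y : affineSpan ℝ F, a⁻¹ • ((y:E) - (1-a) • p₂) ∈ affineSpan ℝ F := by
    intro y
    have h3 := (affineSpan ℝ F).smul_vsub_vadd_mem a⁻¹ y.2 hp2 hp2
    have he : a⁻¹ • ((y:E) -ᵥ p₂) +ᵥ p₂ = a⁻¹ • ((y:E) - (1-a) • p₂) := by
      simp only [vsub_eq_sub, vadd_eq_add, smul_sub, smul_smul]
      rw [mul_sub, mul_one, inv_mul_cancel₀ ha.ne']
      module
    rwa [he] at h3
  set Φ : affineSpan ℝ F → affineSpan ℝ F := fun y => ⟨a • (y:E) + (1-a) • p₂, hmemΦ y⟩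
  set Ψ : affineSpan ℝ F → affineSpan ℝ F := fun y => ⟨a⁻¹ • ((y:E) - (1-a) • p₂), hmemΨ y⟩
  have hleft : Function.LeftInverse Ψ Φ := by
    intro y
    apply Subtype.ext
    simp only [Φ, Ψ, add_sub_cancel_right, smul_smul, inv_mul_cancel₀ ha.ne', one_smul]
  have hright : Function.RightInverse Ψ Φ := by
    intro y
    apply Subtype.ext
    simp only [Φ, Ψ, smul_smul, mul_inv_cancel₀ ha.ne', one_smul, sub_add_cancel]
  have hcΦ : Continuous Φ := by apply Continuous.subtype_mk; fun_prop
  have hcΨ : Continuous Ψ := by apply Continuous.subtype_mk; fun_prop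
  set h : Homeomorph (affineSpan ℝ F) (affineSpan ℝ F) :=
    ⟨⟨Φ, Ψ, hleft, hright⟩, hcΦ, hcΨ⟩
  have himg : Φ '' ((↑) ⁻¹' F : Set (affineSpan ℝ F)) ⊆ ((↑) ⁻¹' F : Set (affineSpan ℝ F)) := by
    rintro _ ⟨u, hu, rfl⟩
    exact hFconv hu h2 ha.le (by linarith) (by ring)
  have hΦint : Φ y₁ ∈ interior ((↑) ⁻¹' F : Set (affineSpan ℝ F)) := by
    have h4 : Φ y₁ ∈ Φ '' interior ((↑) ⁻¹' F : Set (affineSpan ℝ F)) := ⟨y₁, hy₁, rfl⟩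
    have h5 : Φ '' interior ((↑) ⁻¹' F : Set (affineSpan ℝ F))
        = interior (Φ '' ((↑) ⁻¹' F : Set (affineSpan ℝ F))) := h.image_interior _
    rw [h5] at h4
    exact interior_mono himg h4
  exact mem_intrinsicInterior.2 ⟨Φ y₁, hΦint, by simp [Φ, hy₁x]⟩

private lemma projRegion_convex {C F : Set E} (hC : Convex ℝ C) (hFC : F ⊆ C)
    (hFconv : Convex ℝ F) : Convex ℝ (projRegion C F) := by
  intro z₁ hz₁ z₂ hz₂ a b ha hb hab
  rcases eq_or_lt_of_le ha with rfl | ha'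
  · simpa [(by linarith : b = 1)] using hz₂
  rcases eq_or_lt_of_le hb with rfl | hb'
  · simpa [(by linarith : a = 1)] using hz₁
  obtain ⟨p₁, hn₁, hi₁⟩ := hz₁
  obtain ⟨p₂, hn₂, hi₂⟩ := hz₂
  have hp₁F : p₁ ∈ F := intrinsicInterior_subset hi₁
  have hp₂F : p₂ ∈ F := intrinsicInterior_subset hi₂
  have hpii : a • p₁ + b • p₂ ∈ intrinsicInterior ℝ F :=
    combo_mem_intrinsicInterior hFconv hi₁ hp₂F ha' hb hab
  refine ⟨a • p₁ + b • p₂, ?_, hpii⟩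
  refine isNearestPt_of_inner (hFC (intrinsicInterior_subset hpii)) ?_
  intro q hq
  -- ray inequalities
  obtain ⟨ε₁, hε₁, hq₁⟩ := mem_of_ray hi₁ hp₂F
  obtain ⟨ε₂, hε₂, hq₂⟩ := mem_of_ray hi₂ hp₁F
  have k1 := nearest_inner_le hC hn₁ (hFC hq₁)
  have k2 := nearest_inner_le hC hn₂ (hFC hq₂)
  have e1 : p₁ + ε₁ • (p₁ - p₂) - p₁ = ε₁ • (p₁ - p₂) := by module
  have e2 : p₂ + ε₂ • (p₂ - p₁) - p₂ = ε₂ • (p₂ - p₁) := by module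
  rw [e1, real_inner_smul_right] at k1
  rw [e2, real_inner_smul_right] at k2
  have h3 : ⟪z₁ - p₁, p₁ - p₂⟫ ≤ 0 := by
    by_contra hcon; push_neg at hcon; nlinarith
  have h4 : ⟪z₂ - p₂, p₂ - p₁⟫ ≤ 0 := by
    by_contra hcon; push_neg at hcon; nlinarith
  have h1 := nearest_inner_le hC hn₁ hq
  have h2 := nearest_inner_le hC hn₂ hq
  have r1 : ⟪z₁ - p₁, q - p₂⟫ = ⟪z₁ - p₁, q - p₁⟫ + ⟪z₁ - p₁, p₁ - p₂⟫ := by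
    rw [← inner_add_right]; congr 1; module
  have r2 : ⟪z₂ - p₂, q - p₁⟫ = ⟪z₂ - p₂, q - p₂⟫ + ⟪z₂ - p₂, p₂ - p₁⟫ := by
    rw [← inner_add_right]; congr 1; module
  have eu : a • z₁ + b • z₂ - (a • p₁ + b • p₂) = a • (z₁ - p₁) + b • (z₂ - p₂) := by module
  have ew : q - (a • p₁ + b • p₂) = a • (q - p₁) + b • (q - p₂) := by
    have hb2 : b = 1 - a := by linarith
    subst hb2; module
  rw [eu, ew]
  have expand : ⟪a • (z₁ - p₁) + b • (z₂ - p₂), a • (q - p₁) + b • (q - p₂)⟫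
      = a * a * ⟪z₁ - p₁, q - p₁⟫ + a * b * ⟪z₁ - p₁, q - p₂⟫
        + b * a * ⟪z₂ - p₂, q - p₁⟫ + b * b * ⟪z₂ - p₂, q - p₂⟫ := by
    simp [inner_add_left, inner_add_right, real_inner_smul_left, real_inner_smul_right]
    ring
  rw [expand, r1, r2]
  have hab' : 0 ≤ a * b := mul_nonneg ha hb
  nlinarith [mul_nonneg (mul_nonneg ha ha) (neg_nonneg.2 h1),
    mul_nonneg (mul_nonneg hb hb) (neg_nonneg.2 h2)]

private lemma projRegion_nonempty {C F : Set E} [FiniteDimensional ℝ E]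
    (hFC : F ⊆ C) (hFconv : Convex ℝ F) (hFne : F.Nonempty) :
    (projRegion C F).Nonempty := by
  obtain ⟨p, hp⟩ := hFne.intrinsicInterior hFconv
  exact ⟨p, p, ⟨hFC (intrinsicInterior_subset hp),
    fun q hq => by rw [dist_self]; exact dist_nonneg⟩, hp⟩

private lemma density_tendsto_of_convex {d : ℕ} {X : Set (Euc d)}
    (hX : Convex ℝ X) (hne : X.Nonempty) :
    ∃ L : ℝ, ∀ a : Euc d,
      Filter.Tendsto (fun r : ℝ =>
        (volume (closedBall a r ∩ X)).toReal / (volume (closedBall a r)).toReal)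
        Filter.atTop (nhds L) := by
  obtain ⟨x₀, hx₀⟩ := hne
  set Y : Set (Euc d) := (-x₀) +ᵥ X with hYdef
  have hY0 : (0 : Euc d) ∈ Y := ⟨x₀, hx₀, by simp⟩
  have hYc : Convex ℝ Y := hX.vadd _
  have hmemY : ∀ z : Euc d, z - x₀ ∈ Y ↔ z ∈ X := by
    intro z
    constructor
    · rintro ⟨w, hw, hww⟩
      have hwz : w = z := by
        have h9 := hww
        simp only [vadd_eq_add] at h9
        linear_combination (norm := module) h9
      rwa [← hwz]
    · intro hz; exact ⟨z, hz, by simp [vadd_eq_add]; module⟩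
  have hsub : ∀ {r s : ℝ}, 0 < r → r ≤ s → s⁻¹ • Y ⊆ r⁻¹ • Y := by
    intro r s hr hrs x hx
    have hs : 0 < s := lt_of_lt_of_le hr hrs
    obtain ⟨y, hy, rfl⟩ := hx
    have hy2 : (r / s) • y ∈ Y := by
      have h5 := hYc hy hY0 (by positivity : (0:ℝ) ≤ r / s)
        (by rw [sub_nonneg]; exact div_le_one_of_le₀ hrs hs.le : (0:ℝ) ≤ 1 - r / s) (by ring)
      simpa using h5
    refine ⟨(r / s) • y, hy2, ?_⟩
    show r⁻¹ • ((r / s) • y) = s⁻¹ • y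
    rw [smul_smul]
    congr 1
    field_simp
  have hfr : Module.finrank ℝ (Euc d) = d := finrank_euclideanSpace_fin
  set B : ENNReal := volume (closedBall (0 : Euc d) 1) with hBdef
  have hBne : B ≠ ⊤ := measure_closedBall_lt_top.ne
  have hBpos : 0 < B := measure_closedBall_pos _ _ zero_lt_one
  have hIne : ∀ s : Set (Euc d), volume (closedBall (0 : Euc d) 1 ∩ s) ≠ ⊤ :=
    fun s => (lt_of_le_of_lt (measure_mono inter_subset_left) measure_closedBall_lt_top).ne
  set g : ℝ → ℝ := fun r =>
    (volume (closedBall (0 : Euc d) 1 ∩ (max r 1)⁻¹ • Y)).toReal with hgdef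
  have hganti : Antitone g := by
    intro r s hrs
    refine ENNReal.toReal_mono (hIne _) ?_
    exact measure_mono (inter_subset_inter_right _
      (hsub (lt_of_lt_of_le zero_lt_one (le_max_right r 1)) (max_le_max hrs le_rfl)))
  have hgbdd : BddBelow (Set.range g) := ⟨0, by rintro _ ⟨r, rfl⟩; exact ENNReal.toReal_nonneg⟩
  set L₀ : ℝ := ⨅ r, g r with hL₀
  have hgL : Filter.Tendsto g Filter.atTop (nhds L₀) := tendsto_atTop_ciInf hganti hgbdd
  set Bt : ℝ := B.toReal with hBt
  have hBtpos : 0 < Bt := ENNReal.toReal_pos hBpos.ne' hBne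
  refine ⟨L₀ / Bt, fun a => ?_⟩
  set c : ℝ := dist x₀ a with hc
  have hc0 : 0 ≤ c := dist_nonneg
  -- volume of translated scaled intersection
  have Hvol : ∀ r : ℝ, 0 < r →
      volume (closedBall x₀ r ∩ X)
        = ENNReal.ofReal (r ^ d) * volume (closedBall (0 : Euc d) 1 ∩ r⁻¹ • Y) := by
    intro r hr
    have hset : closedBall x₀ r ∩ X
        = x₀ +ᵥ (r • (closedBall (0 : Euc d) 1 ∩ r⁻¹ • Y)) := by
      ext z
      rw [Set.mem_vadd_set_iff_neg_vadd_mem, vadd_eq_add, neg_add_eq_sub,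
        mem_smul_set_iff_inv_smul_mem₀ hr.ne', Set.mem_inter_iff, Set.mem_inter_iff,
        smul_mem_smul_set_iff₀ (inv_ne_zero hr.ne'), hmemY, mem_closedBall, mem_closedBall,
        dist_eq_norm, dist_eq_norm, sub_zero, norm_smul, Real.norm_eq_abs,
        abs_of_pos (inv_pos.2 hr)]
      constructor
      · rintro ⟨h1, h2⟩
        refine ⟨?_, h2⟩
        rw [inv_mul_le_iff₀ hr, mul_one]
        exact h1
      · rintro ⟨h1, h2⟩
        refine ⟨?_, h2⟩
        rw [inv_mul_le_iff₀ hr, mul_one] at h1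
        exact h1
    rw [hset, measure_vadd, Measure.addHaar_smul, hfr, abs_of_nonneg (by positivity)]
  have Hvolball : ∀ (b : Euc d) (r : ℝ), 0 ≤ r →
      volume (closedBall b r) = ENNReal.ofReal (r ^ d) * B := by
    intro b r hr
    rw [Measure.addHaar_closedBall' volume b hr, hfr]
  have HvolX : ∀ r : ℝ, 1 ≤ r →
      (volume (closedBall x₀ r ∩ X)).toReal = r ^ d * g r := by
    intro r hr
    have hr0 : 0 < r := lt_of_lt_of_le zero_lt_one hr
    rw [Hvol r hr0, ENNReal.toReal_mul, ENNReal.toReal_ofReal (by positivity), hgdef]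
    simp only [max_eq_left hr]
  have HvolballR : ∀ (b : Euc d) (r : ℝ), 0 ≤ r →
      (volume (closedBall b r)).toReal = r ^ d * Bt := by
    intro b r hr
    rw [Hvolball b r hr, ENNReal.toReal_mul, ENNReal.toReal_ofReal (by positivity)]
  -- limits of upper and lower comparison functions
  have Tgen : ∀ e : ℝ, Filter.Tendsto
      (fun r : ℝ => ((r + e) ^ d * g (r + e)) / (r ^ d * Bt))
      Filter.atTop (nhds (L₀ / Bt)) := by
    intro e
    have h1 : Filter.Tendsto (fun r : ℝ => (1 + e / r) ^ d * (g (r + e) / Bt))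
        Filter.atTop (nhds (L₀ / Bt)) := by
      have ha : Filter.Tendsto (fun r : ℝ => (1 + e / r) ^ d)
          Filter.atTop (nhds 1) := by
        have hb : Filter.Tendsto (fun r : ℝ => 1 + e / r) Filter.atTop (nhds 1) := by
          have hc2 : Filter.Tendsto (fun r : ℝ => e / r) Filter.atTop (nhds 0) :=
            tendsto_const_nhds.div_atTop Filter.tendsto_id
          simpa using tendsto_const_nhds.add hc2
        simpa using hb.pow d
      have hgb : Filter.Tendsto (fun r : ℝ => g (r + e) / Bt)
          Filter.atTop (nhds (L₀ / Bt)) := by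
        exact (hgL.comp (Filter.tendsto_atTop_add_const_right _ e Filter.tendsto_id)).div_const _
      simpa using ha.mul hgb
    refine h1.congr' ?_
    filter_upwards [Filter.eventually_ge_atTop (1 + |e|)] with r hr
    have hr0 : 0 < r := by
      have := abs_nonneg e; linarith
    have hre : 0 ≤ r + e := by
      have := neg_abs_le e; linarith
    have h9 : (1 + e / r) = (r + e) / r := by field_simp
    rw [h9, div_pow, div_mul_div_comm]
  -- the function with center x₀ tends to the limit
  -- general center: squeeze
  have Hlow : ∀ᶠ r : ℝ in Filter.atTop,
      ((r - c) ^ d * g (r - c)) / (r ^ d * Bt)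
        ≤ (volume (closedBall a r ∩ X)).toReal / (volume (closedBall a r)).toReal := by
    filter_upwards [Filter.eventually_ge_atTop (1 + c)] with r hr
    have hr1 : (1:ℝ) ≤ r - c := by linarith
    have hr0 : 0 < r := by linarith
    have hincl : closedBall x₀ (r - c) ⊆ closedBall a r :=
      closedBall_subset_closedBall' (by rw [← hc]; linarith)

    have hnum : (r - c) ^ d * g (r - c) ≤ (volume (closedBall a r ∩ X)).toReal := by
      rw [← HvolX _ hr1]
      refine ENNReal.toReal_mono ?_ (measure_mono (inter_subset_inter_left X hincl))
      exact (lt_of_le_of_lt (measure_mono inter_subset_left) measure_closedBall_lt_top).ne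
    rw [HvolballR a r hr0.le]
    gcongr
  have Hhigh : ∀ᶠ r : ℝ in Filter.atTop,
      (volume (closedBall a r ∩ X)).toReal / (volume (closedBall a r)).toReal
        ≤ ((r + c) ^ d * g (r + c)) / (r ^ d * Bt) := by
    filter_upwards [Filter.eventually_ge_atTop 1] with r hr
    have hr0 : 0 < r := lt_of_lt_of_le zero_lt_one hr
    have hincl : closedBall a r ⊆ closedBall x₀ (r + c) :=
      closedBall_subset_closedBall' (by rw [dist_comm, ← hc])
    have hnum : (volume (closedBall a r ∩ X)).toReal ≤ (r + c) ^ d * g (r + c) := by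
      rw [← HvolX _ (by linarith)]
      refine ENNReal.toReal_mono ?_ (measure_mono (inter_subset_inter_left X hincl))
      exact (lt_of_le_of_lt (measure_mono inter_subset_left) measure_closedBall_lt_top).ne
    rw [HvolballR a r hr0.le]
    gcongr
  have Tlow : Filter.Tendsto (fun r : ℝ => ((r - c) ^ d * g (r - c)) / (r ^ d * Bt))
      Filter.atTop (nhds (L₀ / Bt)) := by
    have := Tgen (-c)
    simpa [sub_eq_add_neg] using this
  exact tendsto_of_tendsto_of_tendsto_of_le_of_le' Tlow (Tgen c) Hlow Hhigh


/-- For a nonempty closed polyhedral set `C ⊆ ℝ^d` and a face `F`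
of `C`, the limit `lim_{r→∞} λ(B_r(a) ∩ X_F)/λ(B_r(a))` exists and is independent of
the center `a`. -/
theorem projRegion_density_exists {d : ℕ} (C : Set (Euc d))
    (hne : C.Nonempty) (hC : IsPolyhedralSet C)
    (F : Set (Euc d)) (hF : IsFaceOf C F) :
    ∃ L : ℝ, ∀ a : Euc d,
      Filter.Tendsto
        (fun r : ℝ =>
          (volume (closedBall a r ∩ projRegion C F)).toReal /
            (volume (closedBall a r)).toReal)
        Filter.atTop (nhds L) := by
  have hCconv : Convex ℝ C := by
    obtain ⟨m, η, bb, rfl⟩ := hC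
    intro x hx y hy s t hs ht hst i
    have h1 := hx i
    have h2 := hy i
    show _ ≤ _
    rw [inner_add_right, real_inner_smul_right, real_inner_smul_right]
    have h3 : s * bb i + t * bb i = bb i := by rw [← add_mul, hst, one_mul]
    linarith [mul_le_mul_of_nonneg_left h1 hs, mul_le_mul_of_nonneg_left h2 ht]
  have hFC : F ⊆ C := hF.2.subset
  have hFconv : Convex ℝ F := hF.2.convex hCconv
  exact density_tendsto_of_convex (projRegion_convex hCconv hFC hFconv)
    (projRegion_nonempty hFC hFconv hF.1)
end
end

section
/- Let C ⊆ ℝ^d be a nonempty closed polyhedral set and let F be a bounded face of C with dim F ≥ 1. Then lim_{r→∞} λ(B_r(a) ∩ X_F)/λ(B_r(a)) = 0 for every a ∈ ℝ^d, where B_r(a) is the closed ball of radius r centered at a and λ is Lebesgue measure. -/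
/-!
Formalization of statements from "Projection Volumes of Hyperplane Arrangements"
by Klivans and Swartz.
-/

open scoped RealInnerProductSpace Pointwise
open MeasureTheory Metric Set

noncomputable section

attribute [local instance] Classical.decEq Classical.propDecidable

variable {E : Type*} [NormedAddCommGroup E] [InnerProductSpace ℝ E] [FiniteDimensional ℝ E]
  [MeasurableSpace E] [BorelSpace E]

section Aux

variable {E : Type*} [NormedAddCommGroup E] [InnerProductSpace ℝ E]

/-- From a point of the intrinsic interior one can move a little in any direction
of the `vectorSpan` and stay in the set. -/
lemma KS_exists_seg {F : Set E} {p u : E} (hp : p ∈ intrinsicInterior ℝ F)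
    (hu : u ∈ vectorSpan ℝ F) :
    ∃ ε : ℝ, 0 < ε ∧ ∀ t : ℝ, |t| ≤ ε → p + t • u ∈ F := by
  obtain ⟨q, hq, rfl⟩ := hp
  have hmem : ∀ t : ℝ, (q : E) + t • u ∈ affineSpan ℝ F := by
    intro t
    have hdir : t • u ∈ (affineSpan ℝ F).direction := by
      rw [direction_affineSpan]; exact Submodule.smul_mem _ t hu
    simpa [vadd_eq_add, add_comm] using
      AffineSubspace.vadd_mem_of_mem_direction hdir q.2
  set φ : ℝ → affineSpan ℝ F := fun t => ⟨(q : E) + t • u, hmem t⟩ with hφdef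
  have hφ : Continuous φ := by
    apply Continuous.subtype_mk
    fun_prop
  have h0 : φ 0 ∈ interior (((↑) : affineSpan ℝ F → E) ⁻¹' F) := by
    have : φ 0 = q := by simp [hφdef]
    rwa [this]
  have hnh : φ ⁻¹' interior (((↑) : affineSpan ℝ F → E) ⁻¹' F) ∈ nhds (0 : ℝ) :=
    hφ.continuousAt.preimage_mem_nhds (isOpen_interior.mem_nhds h0)
  obtain ⟨ε, hε, hball⟩ := Metric.mem_nhds_iff.1 hnh
  refine ⟨ε / 2, by positivity, fun t ht => ?_⟩
  have htb : t ∈ Metric.ball (0 : ℝ) ε := by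
    simp only [Metric.mem_ball, Real.dist_eq, sub_zero]
    calc |t| ≤ ε / 2 := ht
      _ < ε := by linarith
  have := interior_subset (hball htb)
  exact this

/-- If `z` has `p` as nearest point of `C` and one can move slightly from `p`
inside `C` in direction `±u` (with `u` a unit vector), then `z - p ⟂ u`. -/
lemma KS_inner_eq_zero {C : Set E} {z p u : E} (hn : IsNearestPt C z p)
    (hu : ‖u‖ = 1) {ε : ℝ} (hε : 0 < ε) (hseg : ∀ t : ℝ, |t| ≤ ε → p + t • u ∈ C) :
    ⟪u, z - p⟫ = 0 := by
  have key : ∀ t : ℝ, |t| ≤ ε → 2 * t * ⟪u, z - p⟫ ≤ t ^ 2 := by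
    intro t ht
    have hle := hn.2 _ (hseg t ht)
    rw [dist_eq_norm, dist_eq_norm] at hle
    have h2 : ‖z - p‖ ^ 2 ≤ ‖z - (p + t • u)‖ ^ 2 := by
      have := norm_nonneg (z - p)
      nlinarith
    have hexp : ‖z - (p + t • u)‖ ^ 2
        = ‖z - p‖ ^ 2 - 2 * (t * ⟪z - p, u⟫) + t ^ 2 := by
      have h1 : z - (p + t • u) = (z - p) - t • u := by abel
      rw [h1, @norm_sub_sq_real, real_inner_smul_right, norm_smul, mul_pow,
        Real.norm_eq_abs, sq_abs, hu]
      ring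
    rw [hexp] at h2
    have hsymm : ⟪z - p, u⟫ = ⟪u, z - p⟫ := real_inner_comm _ _
    rw [hsymm] at h2
    linarith
  set s : ℝ := ⟪u, z - p⟫ with hs
  rcases lt_trichotomy s 0 with h | h | h
  · exfalso
    set t : ℝ := -(min ε (-s)) with htdef
    have hm : 0 < min ε (-s) := lt_min hε (by linarith)
    have habs : |t| ≤ ε := by
      rw [htdef, abs_neg, abs_of_pos hm]; exact min_le_left _ _
    have := key t habs
    have h1 : min ε (-s) ≤ -s := min_le_right _ _
    nlinarith
  · exact h
  · exfalso
    set t : ℝ := min ε s with htdef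
    have hm : 0 < t := lt_min hε h
    have habs : |t| ≤ ε := by rw [abs_of_pos hm]; exact min_le_left _ _
    have := key t habs
    have h1 : t ≤ s := min_le_right _ _
    nlinarith

end Aux

/-- For a nonempty closed polyhedral set `C ⊆ ℝ^d` and a bounded
face `F` of `C` with `dim F ≥ 1`, the density of `X_F` at infinity is zero. -/

theorem projRegion_density_of_bounded_face {d : ℕ} (C : Set (Euc d))
    (hne : C.Nonempty) (hC : IsPolyhedralSet C)
    (F : Set (Euc d)) (hF : IsFaceOf C F)
    (hFb : Bornology.IsBounded F) (hFdim : 1 ≤ sdim F) :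
    ∀ a : Euc d,
      Filter.Tendsto
        (fun r : ℝ =>
          (volume (closedBall a r ∩ projRegion C F)).toReal /
            (volume (closedBall a r)).toReal)
        Filter.atTop (nhds 0) := by
  classical
  -- Setup: a unit direction `u` in the span of `F`, a base point `p₀ ∈ F`, a bound `M`.
  obtain ⟨p₀, hp₀⟩ := hF.1
  obtain ⟨M, hM⟩ := hFb.subset_closedBall p₀
  have hM0 : 0 ≤ M := by
    have := hM hp₀; simpa using this
  have hFC : F ⊆ C := hF.2.subset
  obtain ⟨u', hu'mem, hu'ne⟩ :
      ∃ u' ∈ vectorSpan ℝ F, u' ≠ 0 := by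
    have hne' : vectorSpan ℝ F ≠ ⊥ := by
      intro hbot
      rw [sdim, hbot] at hFdim
      simp at hFdim
    exact Submodule.exists_mem_ne_zero_of_ne_bot hne'
  set u : Euc d := ‖u'‖⁻¹ • u' with hudef
  have humem : u ∈ vectorSpan ℝ F := Submodule.smul_mem _ _ hu'mem
  have hunorm : ‖u‖ = 1 := norm_smul_inv_norm hu'ne
  -- the slab bound
  have hslab : ∀ z ∈ projRegion C F, |⟪u, z⟫ - ⟪u, p₀⟫| ≤ M := by
    intro z hz
    obtain ⟨p, hnp, hpi⟩ := hz
    obtain ⟨ε, hε, hseg⟩ := KS_exists_seg hpi humem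
    have horth : ⟪u, z - p⟫ = 0 :=
      KS_inner_eq_zero hnp hunorm hε fun t ht => hFC (hseg t ht)
    have hz_eq : ⟪u, z⟫ = ⟪u, p⟫ := by
      have := horth
      rw [inner_sub_right] at this
      linarith
    have hpF : p ∈ F := intrinsicInterior_subset hpi
    have hdist : ‖p - p₀‖ ≤ M := by
      have := hM hpF
      simpa [dist_eq_norm] using this
    calc |⟪u, z⟫ - ⟪u, p₀⟫| = |⟪u, p - p₀⟫| := by
          rw [hz_eq, inner_sub_right]
      _ ≤ ‖u‖ * ‖p - p₀‖ := abs_real_inner_le_norm _ _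
      _ = ‖p - p₀‖ := by rw [hunorm, one_mul]
      _ ≤ M := hdist
  -- dimension bookkeeping
  have hdpos : 1 ≤ d := by
    calc 1 ≤ sdim F := hFdim
      _ ≤ Module.finrank ℝ (Euc d) := Submodule.finrank_le _
      _ = d := finrank_euclideanSpace_fin
  obtain ⟨n, rfl⟩ : ∃ n, d = n + 1 := ⟨d - 1, (Nat.succ_pred_eq_of_pos hdpos).symm⟩
  set i0 : Fin (n + 1) := ⟨0, Nat.succ_pos n⟩ with hi0def
  -- an orthonormal basis whose first vector is `u`
  obtain ⟨b, hb⟩ : ∃ b : OrthonormalBasis (Fin (n + 1)) ℝ (Euc (n + 1)),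
      ∀ i ∈ ({i0} : Set (Fin (n + 1))), b i = (fun _ => u) i := by
    apply Orthonormal.exists_orthonormalBasis_extension_of_card_eq
    · simp [finrank_euclideanSpace_fin]
    · constructor
      · intro i; simpa using hunorm
      · intro i j hij
        exfalso
        exact hij (Subtype.ext (by rw [i.2, j.2]))
  have hbu : b i0 = u := hb i0 rfl
  intro a
  set vb : ℝ := (volume (Metric.ball (0 : Euc (n + 1)) 1)).toReal with hvbdef
  have hvbpos : 0 < vb :=
    ENNReal.toReal_pos (measure_ball_pos _ _ one_pos).ne' measure_ball_lt_top.ne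
  set c : ℝ := ⟪u, p₀⟫ with hcdef
  set K : ℝ := 2 * M * 2 ^ n / vb with hKdef
  apply squeeze_zero' (g := fun r : ℝ => K / r)
  · filter_upwards with r
    exact div_nonneg ENNReal.toReal_nonneg ENNReal.toReal_nonneg
  · filter_upwards [Filter.eventually_gt_atTop (0 : ℝ)] with r hr
    -- the box
    set I : Fin (n + 1) → Set ℝ :=
      Function.update (fun i => Icc (b.repr a i - r) (b.repr a i + r)) i0
        (Icc (c - M) (c + M)) with hIdef
    have hsub : closedBall a r ∩ projRegion C F ⊆
        b.repr ⁻¹' ((MeasurableEquiv.toLp 2 (Fin (n + 1) → ℝ)).symm ⁻¹'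
          (Set.univ.pi I)) := by
      intro z hz
      have hcoord : ∀ i, b.repr z i ∈ I i := by
        intro i
        by_cases hi : i = i0
        · subst hi
          rw [hIdef, Function.update_self]
          have := hslab z hz.2
          rw [b.repr_apply_apply, hbu]
          rw [abs_sub_le_iff] at this
          constructor <;> [linarith [this.2]; linarith [this.1]]
        · rw [hIdef, Function.update_of_ne hi]
          have hzr : ‖z - a‖ ≤ r := by
            have := hz.1
            rwa [Metric.mem_closedBall, dist_eq_norm] at this
          have : |b.repr z i - b.repr a i| ≤ r := by
            rw [b.repr_apply_apply, b.repr_apply_apply, ← inner_sub_right]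
            calc |⟪b i, z - a⟫| ≤ ‖b i‖ * ‖z - a‖ := abs_real_inner_le_norm _ _
              _ = ‖z - a‖ := by rw [b.orthonormal.1 i, one_mul]
              _ ≤ r := hzr
          rw [abs_sub_le_iff] at this
          constructor <;> [linarith [this.2]; linarith [this.1]]
      intro i _
      exact hcoord i
    have hSm : MeasurableSet (Set.univ.pi I) :=
      MeasurableSet.univ_pi fun i => by
        rw [hIdef]
        by_cases hi : i = i0
        · subst hi; rw [Function.update_self]; exact measurableSet_Icc
        · rw [Function.update_of_ne hi]; exact measurableSet_Icc
    have hTvol : volume (b.repr ⁻¹' ((MeasurableEquiv.toLp 2 (Fin (n + 1) → ℝ)).symm ⁻¹'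
          (Set.univ.pi I)))
        = ENNReal.ofReal (2 * M) * ENNReal.ofReal (2 * r) ^ n := by
      rw [b.measurePreserving_repr.measure_preimage
        ((hSm.preimage (MeasurableEquiv.toLp 2 (Fin (n + 1) → ℝ)).symm.measurable).nullMeasurableSet),
        (EuclideanSpace.volume_preserving_symm_measurableEquiv_toLp (Fin (n + 1))).measure_preimage
          hSm.nullMeasurableSet,
        volume_pi_pi]
      rw [← Finset.mul_prod_erase Finset.univ _ (Finset.mem_univ i0)]
      have h0 : volume (I i0) = ENNReal.ofReal (2 * M) := by
        rw [hIdef, Function.update_self, Real.volume_Icc]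
        congr 1
        ring
      have hIerase : ∀ i ∈ Finset.univ.erase i0,
          volume (I i) = ENNReal.ofReal (2 * r) := by
        intro i hi
        rw [hIdef, Function.update_of_ne (Finset.ne_of_mem_erase hi), Real.volume_Icc]
        congr 1
        ring
      have hprod : ∏ i ∈ Finset.univ.erase i0, volume (I i)
          = ENNReal.ofReal (2 * r) ^ n := by
        rw [Finset.prod_congr rfl hIerase, Finset.prod_const,
          Finset.card_erase_of_mem (Finset.mem_univ i0)]
        simp
      rw [h0, hprod]
    have hV_ne : ENNReal.ofReal (2 * M) * ENNReal.ofReal (2 * r) ^ n ≠ ⊤ := by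
      exact ENNReal.mul_ne_top ENNReal.ofReal_ne_top (by
        exact ENNReal.pow_ne_top ENNReal.ofReal_ne_top)
    have hNle : (volume (closedBall a r ∩ projRegion C F)).toReal
        ≤ 2 * M * (2 * r) ^ n := by
      have h1 : volume (closedBall a r ∩ projRegion C F)
          ≤ ENNReal.ofReal (2 * M) * ENNReal.ofReal (2 * r) ^ n := by
        rw [← hTvol]; exact measure_mono hsub
      have := ENNReal.toReal_mono hV_ne h1
      rwa [ENNReal.toReal_mul, ENNReal.toReal_pow, ENNReal.toReal_ofReal (by linarith),
        ENNReal.toReal_ofReal (by linarith)] at this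
    have hD : (volume (closedBall a r)).toReal = r ^ (n + 1) * vb := by
      rw [Measure.addHaar_closedBall volume a hr.le, ENNReal.toReal_mul,
        ENNReal.toReal_ofReal (by positivity), finrank_euclideanSpace_fin]
    have hDpos : 0 < r ^ (n + 1) * vb := by positivity
    rw [hD]
    calc (volume (closedBall a r ∩ projRegion C F)).toReal / (r ^ (n + 1) * vb)
        ≤ (2 * M * (2 * r) ^ n) / (r ^ (n + 1) * vb) := by
          gcongr
      _ = K / r := by
          rw [hKdef]
          field_simp
          ring
  · exact Filter.Tendsto.div_atTop tendsto_const_nhds Filter.tendsto_id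
end
end
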